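/- arXiv:1108.1505 — 7 statements merged into one kernel-verified Lean document; each statement's English description precedes it below -/
import Mathlib

section
/- Let X be an absolutely continuous real random variable with cumulative distribution function F satisfying F(0) = 0, and let b > 0 with F(b) > 0. Define F1(x) = ∫₀ˣ F(t) dt and F2(x) = ∫₀ˣ F1(t) dt. Then the conditional variance satisfies Var(X | 0 ≤ X ≤ b) = 2·F2(b)/F(b) − F1(b)²/F(b)². -/
open MeasureTheory ProbabilityTheory Set

-- continuity of CDF for atomless probability measure
lemma cdf_continuous_of_noAtoms (μ : Measure ℝ) [IsProbabilityMeasure μ]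
    (hatom : ∀ x : ℝ, μ {x} = 0) : Continuous (fun x => (μ (Iic x)).toReal) := by
  have h : (fun x => (μ (Iic x)).toReal) = fun x => ProbabilityTheory.cdf μ x := by
    funext x; rw [ProbabilityTheory.cdf_eq_real, Measure.real]
  rw [h]
  set f := ProbabilityTheory.cdf μ
  rw [continuous_iff_continuousAt]
  intro x
  rw [f.mono.continuousAt_iff_leftLim_eq_rightLim, f.rightLim_eq]
  have hm : f.measure {x} = 0 := by rw [ProbabilityTheory.measure_cdf]; exact hatom x
  rw [f.measure_singleton] at hm
  have h1 : Function.leftLim f x ≤ f x := f.mono.leftLim_le le_rfl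
  have h2 : f x - Function.leftLim f x ≤ 0 := by
    by_contra hc
    push_neg at hc
    exact absurd hm (by simp [ENNReal.ofReal_eq_zero]; linarith)
  linarith

lemma toReal_measure_Icc' (μ : Measure ℝ) [IsProbabilityMeasure μ]
    (hatom : ∀ x : ℝ, μ {x} = 0) {t b : ℝ} (htb : t ≤ b) :
    (μ (Icc t b)).toReal = (μ (Iic b)).toReal - (μ (Iic t)).toReal := by
  have h1 : μ (Iio t) = μ (Iic t) := measure_congr (Iio_ae_eq_Iic' (hatom t))
  have h2 : μ (Iio t) + μ (Icc t b) = μ (Iic b) := by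
    rw [← measure_union ((Iio_disjoint_Ici le_rfl).mono_right Icc_subset_Ici_self)
      measurableSet_Icc, Iio_union_Icc_eq_Iic htb]
  have := congrArg ENNReal.toReal h2
  rw [ENNReal.toReal_add (measure_ne_top μ _) (measure_ne_top μ _), h1] at this
  linarith


/-- For an absolutely continuous real random variable with
cumulative distribution function `F` satisfying `F 0 = 0`, and `b > 0` with `F b > 0`,
the conditional variance satisfies
`Var(X | 0 ≤ X ≤ b) = 2 F₂(b)/F(b) - F₁(b)²/F(b)²`,
where `F₁ x = ∫₀ˣ F t dt` and `F₂ x = ∫₀ˣ F₁ t dt`. -/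
theorem conditional_variance_eq (μ : Measure ℝ) [IsProbabilityMeasure μ]
    (hac : μ ≪ volume)
    (F F1 F2 : ℝ → ℝ)
    (hF : ∀ x, F x = (μ (Iic x)).toReal)
    (hF1 : ∀ x, F1 x = ∫ t in (0:ℝ)..x, F t)
    (hF2 : ∀ x, F2 x = ∫ t in (0:ℝ)..x, F1 t)
    (hF0 : F 0 = 0) (b : ℝ) (hb : 0 < b) (hFb : 0 < F b) :
    variance id (μ[|Icc 0 b]) = 2 * F2 b / F b - (F1 b) ^ 2 / (F b) ^ 2 := by
  have hatom : ∀ x : ℝ, μ {x} = 0 := fun x => hac (Real.volume_singleton)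
  have hFc : Continuous F := by
    have h : F = fun x => (μ (Iic x)).toReal := funext hF
    rw [h]; exact cdf_continuous_of_noAtoms μ hatom
  have hIic0 : μ (Iic 0) = 0 := by
    have h0 := (hF 0).symm.trans hF0
    rcases (ENNReal.toReal_eq_zero_iff _).mp h0 with h | h
    · exact h
    · exact absurd h (measure_ne_top μ _)
  have hIio0 : μ (Iio 0) = 0 :=
    le_antisymm (hIic0 ▸ measure_mono Iio_subset_Iic_self) zero_le
  have hIcc : μ (Icc 0 b) = μ (Iic b) := by
    rw [← Iio_union_Icc_eq_Iic hb.le,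
      measure_union ((Iio_disjoint_Ici le_rfl).mono_right Icc_subset_Ici_self) measurableSet_Icc,
      hIio0, zero_add]
  have htoReal : (μ (Icc 0 b)).toReal = F b := by rw [hIcc, hF b]
  have hne : μ (Icc 0 b) ≠ 0 := by
    intro h; rw [h] at htoReal; simp at htoReal; linarith
  have hmeasIcc : ∀ t : ℝ, t ≤ b → (μ (Icc t b)).toReal = F b - F t := by
    intro t htb
    rw [hF b, hF t]; exact toReal_measure_Icc' μ hatom htb
  set ν := μ.restrict (Icc 0 b) with hν
  -- integrability and bounds on ν
  have hae_mem : ∀ᵐ x ∂ν, x ∈ Icc 0 b := ae_restrict_mem measurableSet_Icc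
  have hid_int : Integrable (fun x : ℝ => x) ν :=
    (continuous_id.continuousOn).integrableOn_compact isCompact_Icc
  have hsq_int : Integrable (fun x : ℝ => x ^ 2) ν :=
    ((continuous_pow 2).continuousOn).integrableOn_compact isCompact_Icc
  -- first moment
  have hm1 : ∫ x, x ∂ν = b * F b - F1 b := by
    have key := hid_int.integral_eq_integral_Ioc_meas_le (M := b)
      (hae_mem.mono fun x hx => hx.1) (hae_mem.mono fun x hx => hx.2)
    rw [key]
    simp only [measureReal_def]
    have hcongr : ∀ t ∈ Ioc 0 b, (ν {a : ℝ | t ≤ a}).toReal = F b - F t := by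
      intro t ht
      have hset : {a : ℝ | t ≤ a} ∩ Icc 0 b = Icc t b := by
        ext x
        simp only [mem_inter_iff, mem_setOf_eq, mem_Icc]
        exact ⟨fun h => ⟨h.1, h.2.2⟩, fun h => ⟨h.1, le_trans ht.1.le h.1, h.2⟩⟩
      rw [hν, Measure.restrict_apply (show MeasurableSet {a : ℝ | t ≤ a} from measurableSet_Ici), hset]
      exact hmeasIcc t ht.2
    rw [setIntegral_congr_fun measurableSet_Ioc hcongr,
      ← intervalIntegral.integral_of_le hb.le,
      intervalIntegral.integral_sub intervalIntegrable_const (hFc.intervalIntegrable 0 b),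
      intervalIntegral.integral_const, ← hF1 b]
    simp [smul_eq_mul]
  -- integration by parts : ∫ s in 0..b, s * F s = b * F1 b - F2 b
  have hF1d : ∀ x : ℝ, HasDerivAt F1 (F x) x := by
    intro x
    have h : F1 = fun u => ∫ t in (0:ℝ)..u, F t := funext hF1
    rw [h]
    exact intervalIntegral.integral_hasDerivAt_right (hFc.intervalIntegrable 0 x)
      (hFc.stronglyMeasurableAtFilter _ _) hFc.continuousAt
  have hF1c : Continuous F1 := by
    have h : F1 = fun u => ∫ t in (0:ℝ)..u, F t := funext hF1
    rw [h]; exact intervalIntegral.continuous_primitive (fun a b => hFc.intervalIntegrable a b) 0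
  have hIBP : ∫ s in (0:ℝ)..b, s * F s = b * F1 b - F2 b := by
    have := intervalIntegral.integral_mul_deriv_eq_deriv_mul (a := (0:ℝ)) (b := b)
      (u := fun s => s) (v := F1) (u' := fun _ => (1:ℝ)) (v' := F)
      (fun x _ => hasDerivAt_id x) (fun x _ => hF1d x)
      intervalIntegrable_const (hFc.intervalIntegrable 0 b)
    have hF10 : F1 0 = 0 := by rw [hF1 0, intervalIntegral.integral_same]
    rw [hF10] at this
    rw [this, hF2 b]
    simp [one_mul]
  -- second moment
  have hm2 : ∫ x, x ^ 2 ∂ν = b ^ 2 * F b - 2 * (b * F1 b - F2 b) := by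
    have key := hsq_int.integral_eq_integral_Ioc_meas_le (M := b ^ 2)
      (hae_mem.mono fun x hx => pow_nonneg hx.1 2)
      (hae_mem.mono fun x hx => by
        have := pow_le_pow_left₀ hx.1 hx.2 2
        simpa using this)
    rw [key]
    simp only [measureReal_def]
    have hcongr : ∀ t ∈ Ioc 0 (b ^ 2), (ν {a : ℝ | t ≤ a ^ 2}).toReal
        = F b - F (Real.sqrt t) := by
      intro t ht
      have hst : 0 < Real.sqrt t := Real.sqrt_pos.mpr ht.1
      have hsb : Real.sqrt t ≤ b := by
        calc Real.sqrt t ≤ Real.sqrt (b ^ 2) := Real.sqrt_le_sqrt ht.2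
        _ = b := by rw [Real.sqrt_sq hb.le]
      have hset : {a : ℝ | t ≤ a ^ 2} ∩ Icc 0 b = Icc (Real.sqrt t) b := by
        ext x
        simp only [mem_inter_iff, mem_setOf_eq, mem_Icc]
        constructor
        · rintro ⟨h1, h2, h3⟩
          refine ⟨?_, h3⟩
          calc Real.sqrt t ≤ Real.sqrt (x ^ 2) := Real.sqrt_le_sqrt h1
          _ = x := Real.sqrt_sq h2
        · rintro ⟨h1, h2⟩
          refine ⟨?_, le_trans hst.le h1, h2⟩
          calc t = Real.sqrt t ^ 2 := (Real.sq_sqrt ht.1.le).symm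
          _ ≤ x ^ 2 := pow_le_pow_left₀ hst.le h1 2
      have hmble : MeasurableSet {a : ℝ | t ≤ a ^ 2} :=
        measurableSet_le measurable_const (measurable_id.pow_const 2)
      rw [hν, Measure.restrict_apply hmble, hset]
      exact hmeasIcc _ hsb
    rw [setIntegral_congr_fun measurableSet_Ioc hcongr,
      ← intervalIntegral.integral_of_le (by positivity : (0:ℝ) ≤ b ^ 2)]
    -- change of variables t = s^2
    have hg : Continuous fun t => F b - F (Real.sqrt t) :=
      continuous_const.sub (hFc.comp Real.continuous_sqrt)
    have hcv := intervalIntegral.integral_comp_smul_deriv (a := (0:ℝ)) (b := b)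
      (f := fun s => s ^ 2) (f' := fun s => 2 * s) (g := fun t => F b - F (Real.sqrt t))
      (fun x _ => by simpa using hasDerivAt_pow 2 x)
      (by fun_prop) hg
    simp only [Function.comp] at hcv
    have h00 : (0:ℝ) ^ 2 = 0 := by norm_num
    rw [h00] at hcv
    rw [← hcv]
    have hcongr2 : ∀ s ∈ uIcc (0:ℝ) b,
        (2 * s) • (F b - F (Real.sqrt (s ^ 2))) = 2 * s * F b - 2 * (s * F s) := by
      intro s hs
      rw [uIcc_of_le hb.le] at hs
      rw [Real.sqrt_sq hs.1]
      simp [smul_eq_mul]; ring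
    have c1 : Continuous (fun s : ℝ => 2 * s * F b) :=
      (continuous_const.mul continuous_id).mul continuous_const
    have c2 : Continuous (fun s : ℝ => 2 * (s * F s)) :=
      continuous_const.mul (continuous_id.mul hFc)
    rw [intervalIntegral.integral_congr hcongr2,
      intervalIntegral.integral_sub (c1.intervalIntegrable 0 b) (c2.intervalIntegrable 0 b)]
    have e1 : ∫ s in (0:ℝ)..b, 2 * s * F b = b ^ 2 * F b := by
      rw [intervalIntegral.integral_mul_const, intervalIntegral.integral_const_mul,
        integral_id]
      ring
    have e2 : ∫ s in (0:ℝ)..b, 2 * (s * F s) = 2 * (b * F1 b - F2 b) := by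
      rw [intervalIntegral.integral_const_mul, hIBP]
    rw [e1, e2]
  -- conditional measure
  haveI hprob : IsProbabilityMeasure (μ[|Icc 0 b]) := cond_isProbabilityMeasure hne
  have hcond : μ[|Icc 0 b] = (μ (Icc 0 b))⁻¹ • ν := rfl
  have hbound : ∀ᵐ x ∂(μ[|Icc 0 b]), id x ∈ Icc 0 b := by
    rw [hcond]; exact Measure.ae_smul_measure hae_mem _
  have hmem : MemLp id 2 (μ[|Icc 0 b]) := memLp_of_bounded hbound aestronglyMeasurable_id 2
  have hsmul : ∀ f : ℝ → ℝ, ∫ x, f x ∂(μ[|Icc 0 b]) = (F b)⁻¹ * ∫ x, f x ∂ν := by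
    intro f
    rw [hcond, integral_smul_measure, ENNReal.toReal_inv, htoReal, smul_eq_mul]
  rw [variance_eq_sub hmem]
  have h1 : (μ[|Icc 0 b])[id] = (F b)⁻¹ * (b * F b - F1 b) := by
    rw [show ((μ[|Icc 0 b])[id]) = ∫ x, id x ∂(μ[|Icc 0 b]) from rfl]
    simp only [id_eq]
    rw [hsmul, hm1]
  have h2 : (μ[|Icc 0 b])[id ^ 2] = (F b)⁻¹ * (b ^ 2 * F b - 2 * (b * F1 b - F2 b)) := by
    rw [show ((μ[|Icc 0 b])[id ^ 2]) = ∫ x, (id ^ 2) x ∂(μ[|Icc 0 b]) from rfl]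
    simp only [Pi.pow_apply, id_eq]
    rw [hsmul, hm2]
  rw [h1, h2]
  have hFbne : F b ≠ 0 := hFb.ne'
  field_simp
  ring
end

section
/- Let X be an integer-valued random variable with probability mass function p(k) = P(X = k), and let Y be the absolutely continuous random variable with density f(y) = Σₖ p(k)·1(k − 0.5 < y < k + 0.5). Then for any integers a ≤ b with P(a ≤ X ≤ b) > 0: E(X | a ≤ X ≤ b) = E(Y | a − 0.5 < Y ≤ b + 0.5), E(X² | a ≤ X ≤ b) = E(Y² | a − 0.5 < Y ≤ b + 0.5) − 1/12, and Var(X | a ≤ X ≤ b) = Var(Y | a − 0.5 < Y ≤ b + 0.5) − 1/12. -/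
open MeasureTheory ProbabilityTheory Set
open scoped ENNReal NNReal

lemma dcm_round_eq {k : ℤ} {y : ℝ} (hy : y ∈ Ioo ((k:ℝ) - 1/2) ((k:ℝ) + 1/2)) :
    round y = k := by
  obtain ⟨h1, h2⟩ := hy
  rw [round_eq, Int.floor_eq_iff]
  constructor <;> [push_cast; push_cast] <;> linarith

lemma dcm_union (a b : ℤ) :
    Ioc ((a:ℝ) - 1/2) ((b:ℝ) + 1/2) = ⋃ k ∈ Finset.Icc a b, Ioc ((k:ℝ) - 1/2) ((k:ℝ) + 1/2) := by
  ext y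
  simp only [mem_Ioc, mem_iUnion, Finset.mem_Icc, exists_prop]
  constructor
  · rintro ⟨h1, h2⟩
    refine ⟨⌈y - 1/2⌉, ⟨?_, ?_⟩, ?_, ?_⟩
    · have h3 : ((a : ℝ) - 1) < (⌈y - 1/2⌉ : ℝ) :=
        lt_of_lt_of_le (by linarith) (Int.le_ceil _)
      have h4 : (a : ℤ) - 1 < ⌈y - 1/2⌉ := by exact_mod_cast h3
      omega
    · exact Int.ceil_le.2 (by linarith)
    · have := Int.ceil_lt_add_one (y - 1/2)
      linarith
    · have := Int.le_ceil (y - 1/2)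
      linarith
  · rintro ⟨k, ⟨hak, hbk⟩, h1, h2⟩
    have h3 : (a:ℝ) ≤ k := by exact_mod_cast hak
    have h4 : (k:ℝ) ≤ b := by exact_mod_cast hbk
    exact ⟨by linarith, by linarith⟩

lemma dcm_pd (a b : ℤ) : ((Finset.Icc a b : Finset ℤ) : Set ℤ).Pairwise
    (Function.onFun Disjoint fun k : ℤ => Ioc ((k:ℝ) - 1/2) ((k:ℝ) + 1/2)) := by
  intro k _ l _ hkl
  refine Set.Ioc_disjoint_Ioc.2 ?_
  rcases lt_or_gt_of_ne hkl with h | h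
  · have hz : (k:ℝ) + 1 ≤ l := by exact_mod_cast h
    calc min ((k:ℝ)+1/2) ((l:ℝ)+1/2) ≤ (k:ℝ)+1/2 := min_le_left _ _
      _ ≤ (l:ℝ)-1/2 := by linarith
      _ ≤ max ((k:ℝ)-1/2) ((l:ℝ)-1/2) := le_max_right _ _
  · have hz : (l:ℝ) + 1 ≤ k := by exact_mod_cast h
    calc min ((k:ℝ)+1/2) ((l:ℝ)+1/2) ≤ (l:ℝ)+1/2 := min_le_right _ _
      _ ≤ (k:ℝ)-1/2 := by linarith
      _ ≤ max ((k:ℝ)-1/2) ((l:ℝ)-1/2) := le_max_left _ _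

lemma dcm_integ_piece (p : ℤ → ℝ) {h : ℝ → ℝ} (hc : Continuous h) (k : ℤ) :
    IntegrableOn (fun y => p (round y) * h y) (Ioc ((k:ℝ) - 1/2) ((k:ℝ) + 1/2)) volume := by
  have h1 : IntegrableOn (fun y => p k * h y) (Ioo ((k:ℝ) - 1/2) ((k:ℝ) + 1/2)) volume :=
    (continuous_const.mul hc).integrableOn_Icc.mono_set Ioo_subset_Icc_self
  have h2 : IntegrableOn (fun y => p (round y) * h y) (Ioo ((k:ℝ) - 1/2) ((k:ℝ) + 1/2)) volume :=
    h1.congr_fun (fun y hy => by rw [dcm_round_eq hy]) measurableSet_Ioo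
  exact h2.congr_set_ae Ioo_ae_eq_Ioc.symm

lemma dcm_int_piece (p : ℤ → ℝ) {h : ℝ → ℝ} (hc : Continuous h) (k : ℤ) :
    ∫ y in Ioc ((k:ℝ) - 1/2) ((k:ℝ) + 1/2), p (round y) * h y =
      p k * ∫ y in ((k:ℝ) - 1/2)..((k:ℝ) + 1/2), h y := by
  rw [intervalIntegral.integral_of_le (by linarith), MeasureTheory.integral_Ioc_eq_integral_Ioo,
    MeasureTheory.integral_Ioc_eq_integral_Ioo,
    setIntegral_congr_fun measurableSet_Ioo
      (g := fun y => p k * h y) (fun y hy => by rw [dcm_round_eq hy]),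
    integral_const_mul]

lemma dcm_Y_sum (p : ℤ → ℝ) {h : ℝ → ℝ} (hc : Continuous h) (a b : ℤ) :
    ∫ y in Ioc ((a:ℝ) - 1/2) ((b:ℝ) + 1/2), p (round y) * h y =
      ∑ k ∈ Finset.Icc a b, p k * ∫ y in ((k:ℝ) - 1/2)..((k:ℝ) + 1/2), h y := by
  rw [dcm_union a b, integral_biUnion_finset _ (fun k _ => measurableSet_Ioc) (dcm_pd a b)
    (fun k _ => dcm_integ_piece p hc k)]
  exact Finset.sum_congr rfl fun k _ => dcm_int_piece p hc k

/-- Let `X` be integer-valued with probability mass function `p`,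
and let `Y` be the absolutely continuous random variable that is uniform with mass
`p k` on each interval `(k - 0.5, k + 0.5)` (density `y ↦ p (round y)`).
Then for integers `a ≤ b` with `P(a ≤ X ≤ b) > 0`:
`E(X | a ≤ X ≤ b) = E(Y | a - 0.5 < Y ≤ b + 0.5)`,
`E(X² | a ≤ X ≤ b) = E(Y² | a - 0.5 < Y ≤ b + 0.5) - 1/12`, and
`Var(X | a ≤ X ≤ b) = Var(Y | a - 0.5 < Y ≤ b + 0.5) - 1/12`. -/
theorem discrete_continuous_conditional_moments
    (p : ℤ → ℝ) (hp0 : ∀ k, 0 ≤ p k) (hp1 : ∑' k : ℤ, p k = 1)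
    (μX μY : Measure ℝ)
    (hX : μX = Measure.sum (fun k : ℤ => ENNReal.ofReal (p k) • Measure.dirac (k : ℝ)))
    (hY : μY = volume.withDensity (fun y => ENNReal.ofReal (p (round y))))
    (a b : ℤ) (hab : a ≤ b) (hpos : 0 < μX (Icc (a : ℝ) (b : ℝ))) :
    (∫ x, x ∂(μX[|Icc (a : ℝ) (b : ℝ)])) =
      (∫ y, y ∂(μY[|Ioc ((a : ℝ) - 0.5) ((b : ℝ) + 0.5)])) ∧
    (∫ x, x ^ 2 ∂(μX[|Icc (a : ℝ) (b : ℝ)])) =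
      (∫ y, y ^ 2 ∂(μY[|Ioc ((a : ℝ) - 0.5) ((b : ℝ) + 0.5)])) - 1 / 12 ∧
    variance id (μX[|Icc (a : ℝ) (b : ℝ)]) =
      variance id (μY[|Ioc ((a : ℝ) - 0.5) ((b : ℝ) + 0.5)]) - 1 / 12 := by
  rw [show (0.5 : ℝ) = 1/2 by norm_num]
  set F := Finset.Icc a b with hF
  set S := ∑ k ∈ F, p k with hSdef
  have hSnn : 0 ≤ S := Finset.sum_nonneg fun k _ => hp0 k
  have hmem : ∀ k : ℤ, ((k:ℝ) ∈ Icc (a:ℝ) (b:ℝ)) ↔ k ∈ F := by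
    intro k; simp only [mem_Icc, hF, Finset.mem_Icc, Int.cast_le]
  have hdir : ∀ (k : ℤ) (s : Set ℝ), (ENNReal.ofReal (p k) • Measure.dirac ((k:ℝ))) s
      = ENNReal.ofReal (p k) * s.indicator 1 (k:ℝ) := fun k s => by
    rw [Measure.smul_apply, Measure.dirac_apply, smul_eq_mul]
  -- measure of Icc under μX
  have hμXIcc : μX (Icc (a:ℝ) (b:ℝ)) = ENNReal.ofReal S := by
    rw [hX, Measure.sum_apply _ measurableSet_Icc]
    rw [tsum_eq_sum (s := F) (fun k hk => by
      rw [hdir, indicator_of_notMem (fun h => hk ((hmem k).1 h)), mul_zero])]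
    rw [Finset.sum_congr rfl (fun k hk => by
      rw [hdir, indicator_of_mem ((hmem k).2 hk), Pi.one_apply, mul_one])]
    exact (ENNReal.ofReal_sum_of_nonneg (fun k _ => hp0 k)).symm
  have hSpos : 0 < S := by
    rw [hμXIcc] at hpos; exact ENNReal.ofReal_pos.1 hpos
  -- restriction of μX
  have hres : μX.restrict (Icc (a:ℝ) (b:ℝ)) = ∑ k ∈ F, ENNReal.ofReal (p k) • Measure.dirac (k:ℝ) := by
    rw [hX, Measure.restrict_sum _ measurableSet_Icc]
    ext s hs
    rw [Measure.sum_apply _ hs, Measure.finset_sum_apply]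
    rw [tsum_eq_sum (s := F) (fun k hk => by
      rw [Measure.restrict_apply hs, hdir,
        indicator_of_notMem (fun h => hk ((hmem k).1 h.2)), mul_zero])]
    refine Finset.sum_congr rfl fun k hk => ?_
    rw [Measure.restrict_apply hs, hdir, hdir]
    congr 1
    by_cases hks : (k:ℝ) ∈ s
    · rw [indicator_of_mem (Set.mem_inter hks ((hmem k).2 hk)),
        indicator_of_mem hks]
    · rw [indicator_of_notMem (fun h => hks h.1), indicator_of_notMem hks]
  -- integral over restricted μX
  have hint : ∀ (f : ℝ → ℝ), ∫ x, f x ∂(μX.restrict (Icc (a:ℝ) (b:ℝ))) = ∑ k ∈ F, p k * f k := by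
    intro f
    have e := integral_finset_sum_measure
      (μ := fun k : ℤ => ENNReal.ofReal (p k) • Measure.dirac ((k:ℝ))) (s := F) (f := f)
      (fun k _ =>
        ((integrable_const (f (k:ℝ))).congr (ae_eq_dirac f).symm).smul_measure
          ENNReal.ofReal_ne_top)
    rw [hres, e]
    exact Finset.sum_congr rfl fun k _ => by
      rw [integral_smul_measure, integral_dirac, smul_eq_mul, ENNReal.toReal_ofReal (hp0 k)]
  have hcondX : μX[|Icc (a:ℝ) (b:ℝ)] = (ENNReal.ofReal S)⁻¹ • μX.restrict (Icc (a:ℝ) (b:ℝ)) := by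
    simp only [ProbabilityTheory.cond, hμXIcc]
  have hXmom : ∀ f : ℝ → ℝ,
      ∫ x, f x ∂(μX[|Icc (a:ℝ) (b:ℝ)]) = (∑ k ∈ F, p k * f k) / S := by
    intro f
    rw [hcondX, integral_smul_measure, hint f, smul_eq_mul,
      ENNReal.toReal_inv, ENNReal.toReal_ofReal hSnn, inv_mul_eq_div]
  -- Y side
  have hμYint : ∀ (h : ℝ → ℝ), Continuous h →
      IntegrableOn (fun y => p (round y) * h y) (Ioc ((a:ℝ)-1/2) ((b:ℝ)+1/2)) volume := by
    intro h hc
    rw [dcm_union a b]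
    exact integrableOn_finset_iUnion.2 fun k _ => dcm_integ_piece p hc k
  have hS1 : ∫ y in Ioc ((a:ℝ)-1/2) ((b:ℝ)+1/2), p (round y) = S := by
    calc ∫ y in Ioc ((a:ℝ)-1/2) ((b:ℝ)+1/2), p (round y)
        = ∫ y in Ioc ((a:ℝ)-1/2) ((b:ℝ)+1/2), p (round y) * 1 := by simp
      _ = ∑ k ∈ F, p k * ∫ y in ((k:ℝ)-1/2)..((k:ℝ)+1/2), (1:ℝ) :=
          dcm_Y_sum p continuous_const a b
      _ = ∑ k ∈ F, p k := Finset.sum_congr rfl fun k _ => by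
          rw [intervalIntegral.integral_const, smul_eq_mul, mul_one]; ring
  have hμYIoc : μY (Ioc ((a:ℝ)-1/2) ((b:ℝ)+1/2)) = ENNReal.ofReal S := by
    rw [hY, withDensity_apply _ measurableSet_Ioc]
    have hi : IntegrableOn (fun y => p (round y)) (Ioc ((a:ℝ)-1/2) ((b:ℝ)+1/2)) volume := by
      simpa using hμYint (fun _ => 1) continuous_const
    rw [← ofReal_integral_eq_lintegral_ofReal hi (ae_of_all _ fun y => hp0 _), hS1]
  have hcondY : μY[|Ioc ((a:ℝ)-1/2) ((b:ℝ)+1/2)]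
      = (ENNReal.ofReal S)⁻¹ • μY.restrict (Ioc ((a:ℝ)-1/2) ((b:ℝ)+1/2)) := by
    simp only [ProbabilityTheory.cond, hμYIoc]
  have hYres : ∀ h : ℝ → ℝ, Continuous h →
      ∫ y, h y ∂(μY.restrict (Ioc ((a:ℝ)-1/2) ((b:ℝ)+1/2)))
        = ∑ k ∈ F, p k * ∫ y in ((k:ℝ)-1/2)..((k:ℝ)+1/2), h y := by
    intro h hc
    have hm : Measurable fun y : ℝ => (p (round y)).toNNReal := by
      apply Measurable.real_toNNReal
      apply (measurable_of_countable p).comp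
      have : (round : ℝ → ℤ) = fun x => ⌊x + 1/2⌋ := funext fun x => round_eq x
      rw [this]
      exact (measurable_id.add_const _).floor
    rw [hY, restrict_withDensity measurableSet_Ioc]
    have hd : (fun y : ℝ => ENNReal.ofReal (p (round y)))
        = fun y => ((p (round y)).toNNReal : ℝ≥0∞) := rfl
    rw [hd, integral_withDensity_eq_integral_smul hm h, ← dcm_Y_sum p hc a b]
    refine integral_congr_ae (ae_of_all _ fun y => ?_)
    show (p (round y)).toNNReal • h y = p (round y) * h y
    rw [NNReal.smul_def, Real.coe_toNNReal _ (hp0 _), smul_eq_mul]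
  have hYmom : ∀ h : ℝ → ℝ, Continuous h →
      ∫ y, h y ∂(μY[|Ioc ((a:ℝ)-1/2) ((b:ℝ)+1/2)])
        = (∑ k ∈ F, p k * ∫ y in ((k:ℝ)-1/2)..((k:ℝ)+1/2), h y) / S := by
    intro h hc
    rw [hcondY, integral_smul_measure, hYres h hc, smul_eq_mul,
      ENNReal.toReal_inv, ENNReal.toReal_ofReal hSnn, inv_mul_eq_div]
  -- concrete moments
  have hA : ∫ x, x ∂(μX[|Icc (a:ℝ) (b:ℝ)]) = (∑ k ∈ F, p k * (k:ℝ)) / S := hXmom _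
  have hC : ∫ x, x ^ 2 ∂(μX[|Icc (a:ℝ) (b:ℝ)]) = (∑ k ∈ F, p k * (k:ℝ)^2) / S := hXmom _
  have hB : ∫ y, y ∂(μY[|Ioc ((a:ℝ)-1/2) ((b:ℝ)+1/2)]) = (∑ k ∈ F, p k * (k:ℝ)) / S := by
    refine (hYmom (fun y => y) continuous_id).trans ?_
    congr 1
    refine Finset.sum_congr rfl fun k _ => ?_
    rw [integral_id]
    ring
  have hD : ∫ y, y ^ 2 ∂(μY[|Ioc ((a:ℝ)-1/2) ((b:ℝ)+1/2)])
      = (∑ k ∈ F, p k * (k:ℝ)^2) / S + 1/12 := by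
    refine (hYmom (fun y => y ^ 2) (continuous_pow 2)).trans ?_
    have e1 : ∑ k ∈ F, p k * ∫ y in ((k:ℝ)-1/2)..((k:ℝ)+1/2), y ^ 2
        = ∑ k ∈ F, (p k * (k:ℝ)^2 + p k * (1/12)) := by
      refine Finset.sum_congr rfl fun k _ => ?_
      rw [integral_pow]
      push_cast
      ring
    rw [e1, Finset.sum_add_distrib, ← Finset.sum_mul, add_div, ← hSdef]
    congr 1
    field_simp
  -- probability measure instances
  haveI iX : IsProbabilityMeasure (μX[|Icc (a:ℝ) (b:ℝ)]) :=
    cond_isProbabilityMeasure_of_finite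
      (by rw [hμXIcc]; exact (ENNReal.ofReal_pos.2 hSpos).ne')
      (by rw [hμXIcc]; exact ENNReal.ofReal_ne_top)
  haveI iY : IsProbabilityMeasure (μY[|Ioc ((a:ℝ)-1/2) ((b:ℝ)+1/2)]) :=
    cond_isProbabilityMeasure_of_finite
      (by rw [hμYIoc]; exact (ENNReal.ofReal_pos.2 hSpos).ne')
      (by rw [hμYIoc]; exact ENNReal.ofReal_ne_top)
  -- MemLp
  have hmX : MemLp (id : ℝ → ℝ) 2 (μX[|Icc (a:ℝ) (b:ℝ)]) := by
    refine MemLp.of_bound measurable_id.aestronglyMeasurable (|(a:ℝ)| + |(b:ℝ)| + 1) ?_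
    rw [hcondX]
    refine Measure.ae_smul_measure ?_ _
    filter_upwards [ae_restrict_mem measurableSet_Icc] with x hx
    have h1 := hx.1; have h2 := hx.2
    have h3 := neg_abs_le (a:ℝ); have h4 := le_abs_self (b:ℝ)
    have h5 := abs_nonneg (a:ℝ); have h6 := abs_nonneg (b:ℝ)
    rw [id_eq, Real.norm_eq_abs, abs_le]
    constructor <;> linarith
  have hmY : MemLp (id : ℝ → ℝ) 2 (μY[|Ioc ((a:ℝ)-1/2) ((b:ℝ)+1/2)]) := by
    refine MemLp.of_bound measurable_id.aestronglyMeasurable (|(a:ℝ)| + |(b:ℝ)| + 1) ?_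
    rw [hcondY]
    refine Measure.ae_smul_measure ?_ _
    filter_upwards [ae_restrict_mem measurableSet_Ioc] with x hx
    have h1 := hx.1; have h2 := hx.2
    have h3 := neg_abs_le (a:ℝ); have h4 := le_abs_self (b:ℝ)
    have h5 := abs_nonneg (a:ℝ); have h6 := abs_nonneg (b:ℝ)
    rw [id_eq, Real.norm_eq_abs, abs_le]
    constructor <;> linarith
  have hid2 : ((id : ℝ → ℝ) ^ 2) = fun x : ℝ => x ^ 2 := by
    funext x; simp
  have hVX : variance id (μX[|Icc (a:ℝ) (b:ℝ)])
      = (∑ k ∈ F, p k * (k:ℝ)^2) / S - ((∑ k ∈ F, p k * (k:ℝ)) / S)^2 := by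
    rw [variance_eq_sub hmX, hid2]
    rw [show (∫ x, x ^ 2 ∂(μX[|Icc (a:ℝ) (b:ℝ)])) = (∑ k ∈ F, p k * (k:ℝ)^2) / S from hC,
      show (∫ x, id x ∂(μX[|Icc (a:ℝ) (b:ℝ)])) = (∑ k ∈ F, p k * (k:ℝ)) / S from hA]
  have hVY : variance id (μY[|Ioc ((a:ℝ)-1/2) ((b:ℝ)+1/2)])
      = ((∑ k ∈ F, p k * (k:ℝ)^2) / S + 1/12) - ((∑ k ∈ F, p k * (k:ℝ)) / S)^2 := by
    rw [variance_eq_sub hmY, hid2]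
    rw [show (∫ y, y ^ 2 ∂(μY[|Ioc ((a:ℝ)-1/2) ((b:ℝ)+1/2)]))
        = (∑ k ∈ F, p k * (k:ℝ)^2) / S + 1/12 from hD,
      show (∫ y, id y ∂(μY[|Ioc ((a:ℝ)-1/2) ((b:ℝ)+1/2)]))
        = (∑ k ∈ F, p k * (k:ℝ)) / S from hB]
  refine ⟨hA.trans hB.symm, ?_, ?_⟩
  · rw [hC, hD]; ring
  · rw [hVX, hVY]; ring
end

section
/- Let X be an integer-valued random variable with a geometric distribution, P(X = k) = (1 − q)·q^k for k = 0, 1, 2, … and some 0 < q < 1. Then the conditional variance Var(X | X ∈ A) is partially monotonic in intervals: Var(X | X ∈ A) ≤ Var(X | X ∈ B) for any finite intervals A ⊂ B with P(X ∈ A) > 0. -/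
open MeasureTheory ProbabilityTheory Set

noncomputable def geoS (q : ℝ) (N : ℕ) : ℝ := ∑ k ∈ Finset.range (N+1), q^k
noncomputable def geoM1 (q : ℝ) (N : ℕ) : ℝ := ∑ k ∈ Finset.range (N+1), (k:ℝ) * q^k
noncomputable def geoM2 (q : ℝ) (N : ℕ) : ℝ := ∑ k ∈ Finset.range (N+1), (k:ℝ)^2 * q^k
noncomputable def geoV (q : ℝ) (N : ℕ) : ℝ :=
  (geoM2 q N * geoS q N - (geoM1 q N)^2) / (geoS q N)^2

lemma geoS_closed (q : ℝ) : ∀ N, (1-q) * geoS q N = 1 - q^(N+1)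
  | 0 => by simp [geoS]
  | (N+1) => by
      have ih := geoS_closed q N
      simp only [geoS, Finset.sum_range_succ] at ih ⊢
      linear_combination ih

lemma geoM1_closed (q : ℝ) : ∀ N, (1-q)^2 * geoM1 q N
    = q - ((N:ℝ)+1) * q^(N+1) + (N:ℝ) * q^(N+2)
  | 0 => by simp [geoM1]
  | (N+1) => by
      have ih := geoM1_closed q N
      simp only [geoM1, Finset.sum_range_succ] at ih ⊢
      push_cast
      linear_combination ih

lemma geoM2_closed (q : ℝ) : ∀ N, (1-q)^3 * geoM2 q N
    = q*(1+q) - ((N:ℝ)+1)^2 * q^(N+1) + (2*(N:ℝ)^2+2*(N:ℝ)-1) * q^(N+2) - (N:ℝ)^2 * q^(N+3)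
  | 0 => by simp [geoM2]; ring
  | (N+1) => by
      have ih := geoM2_closed q N
      simp only [geoM2, Finset.sum_range_succ] at ih ⊢
      push_cast
      linear_combination ih

lemma geoE_closed (q : ℝ) (N : ℕ) :
    (1-q)^4 * (geoM2 q N * geoS q N - (geoM1 q N)^2)
      = q * (1 - q^(N+1))^2 - ((N:ℝ)+1)^2 * q^(N+1) * (1-q)^2 := by
  have h : (1-q)^4 * (geoM2 q N * geoS q N - (geoM1 q N)^2)
      = ((1-q)^3 * geoM2 q N) * ((1-q) * geoS q N) - ((1-q)^2 * geoM1 q N)^2 := by ring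
  rw [h, geoM2_closed, geoS_closed, geoM1_closed]
  ring

lemma geoS_pos {q : ℝ} (hq0 : 0 < q) (N : ℕ) : 0 < geoS q N := by
  apply Finset.sum_pos (fun i _ => pow_pos hq0 i)
  exact ⟨0, Finset.mem_range.mpr (Nat.succ_pos N)⟩
open Finset

lemma geom_one_sub (r : ℝ) (n : ℕ) :
    1 - r^n = (1-r) * ∑ i ∈ Finset.range n, r^i := by
  linear_combination geom_sum_mul r n

lemma key_linear {r : ℝ} (hr0 : 0 < r) (hr1 : r < 1) (N : ℕ) :
    ((N:ℝ)+2) * r * (1 - r^(2*N+2)) ≤ ((N:ℝ)+1) * (1 - r^(2*N+4)) := by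
  set A : ℝ := ∑ i ∈ Finset.range (2*N+2), r^(i+1) with hA
  have hsplit : A = ∑ j ∈ Finset.range (N+1), (r^(j+1) + r^(N+2+(N-j))) := by
    have h1 : 2*N+2 = (N+1) + (N+1) := by omega
    rw [hA, h1, Finset.sum_range_add, ← Finset.sum_range_reflect (fun i => r^((N+1)+i+1)) (N+1),
      ← Finset.sum_add_distrib]
    apply Finset.sum_congr rfl
    intro j hj
    have hj' : j < N + 1 := Finset.mem_range.mp hj
    have : N + 1 + (N + 1 - 1 - j) + 1 = N+2+(N-j) := by omega
    rw [this]
  have hbound : A ≤ ((N:ℝ)+1) * (1 + r^(2*N+3)) := by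
    rw [hsplit]
    calc ∑ j ∈ Finset.range (N+1), (r^(j+1) + r^(N+2+(N-j)))
        ≤ ∑ _j ∈ Finset.range (N+1), (1 + r^(2*N+3)) := by
          apply Finset.sum_le_sum
          intro j hj
          have hj' : j < N + 1 := Finset.mem_range.mp hj
          have e1 : (0:ℝ) ≤ (1 - r^(j+1)) * (1 - r^(N+2+(N-j))) := by
            apply mul_nonneg <;>
            · rw [sub_nonneg]
              exact pow_le_one₀ hr0.le hr1.le
          have e2 : r^(j+1) * r^(N+2+(N-j)) = r^(2*N+3) := by
            rw [← pow_add]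
            congr 1
            omega
          nlinarith [e1, e2]
      _ = ((N:ℝ)+1) * (1 + r^(2*N+3)) := by
          rw [Finset.sum_const, Finset.card_range, nsmul_eq_mul]
          push_cast; ring
  have hstep : ∀ M:ℕ, ∑ i ∈ Finset.range (M+2), r^i
      = 1 + (∑ i ∈ Finset.range M, r^(i+1)) + r^(M+1) := by
    intro M
    rw [Finset.sum_range_succ, Finset.sum_range_succ']
    ring
  have hB : ∑ i ∈ Finset.range (2*N+4), r^i = 1 + A + r^(2*N+3) := by
    rw [show 2*N+4 = (2*N+2)+2 by omega, hstep (2*N+2),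
      show (2*N+2)+1 = 2*N+3 by omega, hA]
  have hmulA : r * ∑ i ∈ Finset.range (2*N+2), r^i = A := by
    rw [Finset.mul_sum, hA]
    exact Finset.sum_congr rfl (fun i _ => (pow_succ' r i).symm)
  have hA2 : r * (1 - r^(2*N+2)) = (1-r) * A := by
    rw [geom_one_sub]
    linear_combination (1-r) * hmulA
  have hB2 : 1 - r^(2*N+4) = (1-r) * (1 + A + r^(2*N+3)) := by
    rw [geom_one_sub, hB]
  rw [mul_assoc, hA2, hB2]
  have hr' : (0:ℝ) ≤ 1 - r := by linarith
  calc ((N:ℝ)+2) * ((1-r) * A) = (1-r) * (((N:ℝ)+2) * A) := by ring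
    _ ≤ (1-r) * (((N:ℝ)+1) * (1 + A + r^(2*N+3))) := by
        apply mul_le_mul_of_nonneg_left _ hr'
        nlinarith [hbound]
    _ = ((N:ℝ)+1) * ((1-r) * (1 + A + r^(2*N+3))) := by ring

section scratch
variable {q : ℝ}

lemma key_sq (hq0 : 0 < q) (hq1 : q < 1) (N : ℕ) :
    ((N:ℝ)+2)^2 * q * (1 - q^(N+1))^2 ≤ ((N:ℝ)+1)^2 * (1 - q^(N+2))^2 := by
  set r := Real.sqrt q with hr
  have hr0 : 0 < r := Real.sqrt_pos.mpr hq0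
  have hr1 : r < 1 := by
    rw [hr, show (1:ℝ) = Real.sqrt 1 by simp]
    exact Real.sqrt_lt_sqrt hq0.le hq1
  have hrq : r^2 = q := Real.sq_sqrt hq0.le
  have h1 : q^(N+1) = r^(2*N+2) := by
    rw [← hrq, ← pow_mul]
    ring
  have h2 : q^(N+2) = r^(2*N+4) := by
    rw [← hrq, ← pow_mul]
    ring
  have hk := key_linear hr0 hr1 N
  have hnn : (0:ℝ) ≤ ((N:ℝ)+2) * r * (1 - r^(2*N+2)) := by
    have := pow_le_one₀ hr0.le hr1.le (n := 2*N+2)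
    have : (0:ℝ) ≤ 1 - r^(2*N+2) := by linarith
    positivity
  have := mul_self_le_mul_self hnn hk
  rw [h1, h2, ← hrq]
  nlinarith [this]

end scratch

lemma geoV_succ {q : ℝ} (hq0 : 0 < q) (hq1 : q < 1) (N : ℕ) :
    geoV q N ≤ geoV q (N+1) := by
  have h1q : (0:ℝ) < 1 - q := by linarith
  have hS : 0 < geoS q N := geoS_pos hq0 N
  have hS' : 0 < geoS q (N+1) := geoS_pos hq0 (N+1)
  rw [geoV, geoV, div_le_div_iff₀ (by positivity) (by positivity)]
  have hmain :
      ((1-q)^4 * (geoM2 q N * geoS q N - (geoM1 q N)^2)) * ((1-q) * geoS q (N+1))^2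
        ≤ ((1-q)^4 * (geoM2 q (N+1) * geoS q (N+1) - (geoM1 q (N+1))^2)) * ((1-q) * geoS q N)^2 := by
    rw [geoE_closed, geoE_closed, geoS_closed, geoS_closed]
    push_cast
    have hfac :
        (q * (1 - q^(N+1+1))^2 - ((N:ℝ)+1+1)^2 * q^(N+1+1) * (1-q)^2) * (1 - q^(N+1))^2
          - (q * (1 - q^(N+1))^2 - ((N:ℝ)+1)^2 * q^(N+1) * (1-q)^2) * (1 - q^(N+1+1))^2
        = q^(N+1) * (1-q)^2 *
            (((N:ℝ)+1)^2 * (1 - q^(N+2))^2 - ((N:ℝ)+2)^2 * q * (1 - q^(N+1))^2) := by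
      ring
    have hP : (0:ℝ) ≤ q^(N+1) * (1-q)^2 *
        (((N:ℝ)+1)^2 * (1 - q^(N+2))^2 - ((N:ℝ)+2)^2 * q * (1 - q^(N+1))^2) :=
      mul_nonneg (mul_nonneg (pow_pos hq0 (N+1)).le (pow_pos h1q 2).le)
        (sub_nonneg.mpr (key_sq hq0 hq1 N))
    linarith [hfac, hP]
  have h6 : (0:ℝ) < (1-q)^6 := by positivity
  have hexp : ((1-q)^4 * (geoM2 q N * geoS q N - (geoM1 q N)^2)) * ((1-q) * geoS q (N+1))^2
      = (1-q)^6 * ((geoM2 q N * geoS q N - (geoM1 q N)^2) * (geoS q (N+1))^2) := by ring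
  have hexp2 : ((1-q)^4 * (geoM2 q (N+1) * geoS q (N+1) - (geoM1 q (N+1))^2)) * ((1-q) * geoS q N)^2
      = (1-q)^6 * ((geoM2 q (N+1) * geoS q (N+1) - (geoM1 q (N+1))^2) * (geoS q N)^2) := by ring
  rw [hexp, hexp2] at hmain
  exact le_of_mul_le_mul_left hmain h6

lemma geoV_mono {q : ℝ} (hq0 : 0 < q) (hq1 : q < 1) : Monotone (geoV q) :=
  monotone_nat_of_le_succ (geoV_succ hq0 hq1)

lemma integrable_dirac' {f : ℝ → ℝ} (hf : Measurable f) (a : ℝ) :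
    Integrable f (Measure.dirac a) := by
  refine ⟨hf.aestronglyMeasurable, ?_⟩
  simp [HasFiniteIntegral, lintegral_dirac]

lemma geo_isProbability {q : ℝ} (hq0 : 0 < q) (hq1 : q < 1) :
    IsProbabilityMeasure (Measure.sum
      (fun k : ℕ => ENNReal.ofReal ((1 - q) * q ^ k) • Measure.dirac (k : ℝ))) := by
  constructor
  rw [Measure.sum_apply _ MeasurableSet.univ]
  simp only [Measure.smul_apply, Measure.dirac_apply' _ MeasurableSet.univ,
    Set.indicator_univ, Pi.one_apply, smul_eq_mul, mul_one]
  have hsum : Summable (fun k : ℕ => (1 - q) * q ^ k) :=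
    (summable_geometric_of_lt_one hq0.le hq1).mul_left _
  rw [← ENNReal.ofReal_tsum_of_nonneg (fun k => mul_nonneg (by linarith) (pow_nonneg hq0.le k)) hsum]
  rw [tsum_mul_left, tsum_geometric_of_lt_one hq0.le hq1,
    mul_inv_cancel₀ (by linarith : (1:ℝ) - q ≠ 0)]
  simp

lemma cond_variance_eq (q : ℝ) (hq0 : 0 < q) (hq1 : q < 1)
    (μ : Measure ℝ)
    (hμ : μ = Measure.sum
      (fun k : ℕ => ENNReal.ofReal ((1 - q) * q ^ k) • Measure.dirac (k : ℝ)))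
    (A : Set ℝ) (hA : A.OrdConnected) (hAbdd : Bornology.IsBounded A)
    (hApos : 0 < μ A) :
    ∃ m n : ℕ, m ≤ n ∧ (∀ k : ℕ, ((k:ℝ) ∈ A ↔ m ≤ k ∧ k ≤ n)) ∧
      variance id (μ[|A]) = geoV q (n - m) := by
  classical
  have hmeasA : MeasurableSet A := hA.measurableSet
  have hprob : IsProbabilityMeasure μ := hμ ▸ geo_isProbability hq0 hq1
  -- the set of naturals in A
  set T : Set ℕ := {k : ℕ | (k:ℝ) ∈ A} with hT
  have hTne : T.Nonempty := by
    by_contra hne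
    rw [Set.not_nonempty_iff_eq_empty] at hne
    have : μ A = 0 := by
      rw [hμ, Measure.sum_apply _ hmeasA]
      have : ∀ k : ℕ, (Measure.dirac (k:ℝ)) A = 0 := by
        intro k
        rw [Measure.dirac_apply' _ hmeasA, Set.indicator_of_notMem]
        intro hk
        exact absurd (Set.eq_empty_iff_forall_notMem.mp hne k) (fun h => h hk)
      simp [Measure.smul_apply, this]
    rw [this] at hApos; exact lt_irrefl 0 hApos
  obtain ⟨C, hC⟩ := hAbdd.exists_norm_le
  have hTbdd : BddAbove T := by
    refine ⟨⌈C⌉₊, fun k hk => ?_⟩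
    have h1 : ((k:ℕ):ℝ) ≤ C := by
      have := hC _ hk
      rwa [Real.norm_eq_abs, abs_of_nonneg (Nat.cast_nonneg k)] at this
    exact_mod_cast h1.trans (Nat.le_ceil C)
  set m := sInf T with hm
  set n := sSup T with hn
  have hmT : m ∈ T := Nat.sInf_mem hTne
  have hnT : n ∈ T := Nat.sSup_mem hTne hTbdd
  have hmn : m ≤ n := Nat.sInf_le hnT
  have hmem : ∀ k : ℕ, ((k:ℝ) ∈ A ↔ m ≤ k ∧ k ≤ n) := by
    intro k
    constructor
    · intro hk
      exact ⟨Nat.sInf_le hk, le_csSup hTbdd hk⟩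
    · rintro ⟨h1, h2⟩
      exact hA.out hmT hnT ⟨by exact_mod_cast h1, by exact_mod_cast h2⟩
  refine ⟨m, n, hmn, hmem, ?_⟩
  set w : ℕ → ℝ := fun k => (1 - q) * q ^ k with hw
  have hwpos : ∀ k, 0 < w k := fun k => mul_pos (by linarith) (pow_pos hq0 k)
  set I : Finset ℕ := Finset.Icc m n with hI
  set W : ℝ := ∑ k ∈ I, w k with hWdef
  have hmI : m ∈ I := Finset.mem_Icc.mpr ⟨le_refl m, hmn⟩
  have hWpos : 0 < W := Finset.sum_pos (fun k _ => hwpos k) ⟨m, hmI⟩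
  have hμA : μ A = ENNReal.ofReal W := by
    rw [hμ, Measure.sum_apply _ hmeasA]
    have hterm : ∀ k : ℕ, (ENNReal.ofReal (w k) • Measure.dirac (k:ℝ)) A
        = if k ∈ I then ENNReal.ofReal (w k) else 0 := by
      intro k
      rw [Measure.smul_apply, Measure.dirac_apply' _ hmeasA, smul_eq_mul]
      by_cases hk : k ∈ I
      · rw [Set.indicator_of_mem ((hmem k).mpr (Finset.mem_Icc.mp hk)), if_pos hk,
          Pi.one_apply, mul_one]
      · rw [Set.indicator_of_notMem (fun hc => hk (Finset.mem_Icc.mpr ((hmem k).mp hc))),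
          if_neg hk, mul_zero]
    rw [tsum_congr hterm, tsum_eq_sum (fun k hk => if_neg hk),
      Finset.sum_congr rfl (fun k hk => if_pos hk),
      ← ENNReal.ofReal_sum_of_nonneg (fun k _ => (hwpos k).le)]
  have hres : μ.restrict A = ∑ k ∈ I, ENNReal.ofReal (w k) • Measure.dirac (k:ℝ) := by
    rw [hμ, Measure.restrict_sum _ hmeasA]
    ext s hs
    rw [Measure.sum_apply _ hs, Measure.finset_sum_apply]
    have hterm : ∀ k : ℕ, ((ENNReal.ofReal (w k) • Measure.dirac (k:ℝ)).restrict A) s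
        = if k ∈ I then (ENNReal.ofReal (w k) • Measure.dirac (k:ℝ)) s else 0 := by
      intro k
      rw [Measure.restrict_smul, MeasureTheory.restrict_dirac' hmeasA]
      by_cases hk : k ∈ I
      · rw [if_pos ((hmem k).mpr (Finset.mem_Icc.mp hk)), if_pos hk]
      · rw [if_neg (fun hc => hk (Finset.mem_Icc.mpr ((hmem k).mp hc))), if_neg hk]
        simp
    rw [tsum_congr hterm, tsum_eq_sum (fun k hk => if_neg hk)]
    exact Finset.sum_congr rfl fun k hk => if_pos hk
  have hint : ∀ f : ℝ → ℝ, Measurable f →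
      ∫ x, f x ∂(μ[|A]) = (∑ k ∈ I, w k * f k) / W := by
    intro f hf
    rw [ProbabilityTheory.cond, integral_smul_measure, hres,
      integral_finset_sum_measure
        (fun k _ => (integrable_dirac' hf _).smul_measure ENNReal.ofReal_ne_top)]
    simp only [integral_smul_measure, integral_dirac, smul_eq_mul]
    rw [hμA]
    have h1 : ((ENNReal.ofReal W)⁻¹).toReal = W⁻¹ := by
      rw [← ENNReal.ofReal_inv_of_pos hWpos, ENNReal.toReal_ofReal (inv_nonneg.mpr hWpos.le)]
    rw [h1, Finset.sum_congr rfl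
      (fun k (_ : k ∈ I) => by rw [ENNReal.toReal_ofReal (hwpos k).le] :
        ∀ k ∈ I, (ENNReal.ofReal (w k)).toReal * f k = w k * f k)]
    ring
  have hP : IsProbabilityMeasure (μ[|A]) := cond_isProbabilityMeasure hApos.ne'
  have hmem2 : MemLp id 2 (μ[|A]) := by
    apply MemLp.of_bound measurable_id.aestronglyMeasurable C
    rw [ProbabilityTheory.cond]
    exact Measure.ae_smul_measure ((ae_restrict_mem hmeasA).mono (fun x hx => hC x hx)) _
  rw [variance_eq_sub hmem2]
  have hidsq : (id : ℝ → ℝ)^2 = fun x => x^2 := by funext x; simp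
  have hint1 : ∫ x, id x ∂(μ[|A]) = (∑ k ∈ I, w k * (k:ℝ)) / W := hint id measurable_id
  have hint2 : (μ[|A])[(id : ℝ → ℝ)^2] = (∑ k ∈ I, w k * (k:ℝ)^2) / W := by
    rw [hidsq]
    exact hint (fun x => x^2) (measurable_id.pow_const 2)
  set N := n - m with hN
  have hreindex : ∀ g : ℕ → ℝ,
      ∑ k ∈ I, g k = ∑ i ∈ Finset.range (N+1), g (m+i) := by
    intro g
    rw [hI, ← Finset.Ico_add_one_right_eq_Icc, Finset.sum_Ico_eq_sum_range,
      show n+1-m = N+1 by omega]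
  have hW' : W = (1-q)*q^m * geoS q N := by
    rw [hWdef, hreindex]
    rw [show (∑ i ∈ Finset.range (N+1), w (m+i))
        = ∑ i ∈ Finset.range (N+1), (1-q)*q^m * q^i from
      Finset.sum_congr rfl (fun i _ => by rw [hw]; simp only; rw [pow_add]; ring)]
    rw [geoS, Finset.mul_sum]
  have hM1 : (∑ k ∈ I, w k * (k:ℝ)) = (1-q)*q^m * ((m:ℝ) * geoS q N + geoM1 q N) := by
    rw [hreindex]
    rw [show (∑ i ∈ Finset.range (N+1), w (m+i) * ((m+i : ℕ):ℝ))
        = ∑ i ∈ Finset.range (N+1), (1-q)*q^m * ((m:ℝ)*q^i + (i:ℝ)*q^i) from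
      Finset.sum_congr rfl (fun i _ => by rw [hw]; simp only; push_cast; rw [pow_add]; ring)]
    rw [← Finset.mul_sum, Finset.sum_add_distrib, geoS, geoM1, Finset.mul_sum]
  have hM2 : (∑ k ∈ I, w k * (k:ℝ)^2)
      = (1-q)*q^m * ((m:ℝ)^2 * geoS q N + 2*(m:ℝ) * geoM1 q N + geoM2 q N) := by
    rw [hreindex]
    rw [show (∑ i ∈ Finset.range (N+1), w (m+i) * ((m+i : ℕ):ℝ)^2)
        = ∑ i ∈ Finset.range (N+1),
            (1-q)*q^m * ((m:ℝ)^2*q^i + 2*(m:ℝ)*((i:ℝ)*q^i) + (i:ℝ)^2*q^i) from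
      Finset.sum_congr rfl (fun i _ => by rw [hw]; simp only; push_cast; rw [pow_add]; ring)]
    rw [← Finset.mul_sum, Finset.sum_add_distrib, Finset.sum_add_distrib,
      geoS, geoM1, geoM2, Finset.mul_sum, Finset.mul_sum]
  rw [hint2, hint1, hM1, hM2, hW', geoV]
  have hS : 0 < geoS q N := geoS_pos hq0 N
  have hc : (1-q)*q^m > 0 := mul_pos (by linarith) (pow_pos hq0 m)
  have h1q : (1:ℝ) - q ≠ 0 := by linarith
  field_simp
  ring

/-- Let `X` be geometric: `P(X = k) = (1 - q) q^k`, `k = 0, 1, 2, …`,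
`0 < q < 1`. Then the conditional variance is partially monotonic over finite
(bounded) intervals: `Var(X | X ∈ A) ≤ Var(X | X ∈ B)` for bounded intervals
`A ⊆ B` with `P(X ∈ A) > 0`. -/
theorem geometric_conditional_variance_partially_monotone
    (q : ℝ) (hq0 : 0 < q) (hq1 : q < 1)
    (μ : Measure ℝ)
    (hμ : μ = Measure.sum
      (fun k : ℕ => ENNReal.ofReal ((1 - q) * q ^ k) • Measure.dirac (k : ℝ)))
    (A B : Set ℝ) (hA : A.OrdConnected) (hB : B.OrdConnected)
    (hAbdd : Bornology.IsBounded A) (hBbdd : Bornology.IsBounded B)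
    (hAB : A ⊆ B) (hApos : 0 < μ A) :
    variance id (μ[|A]) ≤ variance id (μ[|B]) := by
  obtain ⟨mA, nA, hmnA, hmemA, hVA⟩ := cond_variance_eq q hq0 hq1 μ hμ A hA hAbdd hApos
  have hBpos : 0 < μ B := lt_of_lt_of_le hApos (measure_mono hAB)
  obtain ⟨mB, nB, hmnB, hmemB, hVB⟩ := cond_variance_eq q hq0 hq1 μ hμ B hB hBbdd hBpos
  rw [hVA, hVB]
  apply geoV_mono hq0 hq1
  have h1 := (hmemB mA).mp (hAB ((hmemA mA).mpr ⟨le_refl _, hmnA⟩))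
  have h2 := (hmemB nA).mp (hAB ((hmemA nA).mpr ⟨hmnA, le_refl _⟩))
  omega
end

section
/- Let X be a Poisson random variable with mean μ. Then Var(X | μ < X < b) is an increasing function of b for b > μ (over b with P(μ < X < b) > 0), and Var(X | a < X < μ) is a decreasing function of a for a < μ (over a with P(a < X < μ) > 0). -/
set_option maxHeartbeats 2000000
open Finset

namespace PoissonAux

def LC (w : ℕ → ℝ) (M : ℕ) : Prop :=
  ∀ c a b d : ℕ, c ≤ a → a ≤ b → b ≤ d → d ≤ M → c + d = a + b → w c * w d ≤ w a * w b

lemma LC.mono {w : ℕ → ℝ} {M M' : ℕ} (h : LC w M) (hM : M' ≤ M) : LC w M' :=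
  fun c a b d h1 h2 h3 h4 h5 => h c a b d h1 h2 h3 (h4.trans hM) h5

lemma LC.spread {w : ℕ → ℝ} {M : ℕ} (h : LC w M) (c a b d : ℕ)
    (hca : c ≤ a) (hcb : c ≤ b) (had : a ≤ d) (hbd : b ≤ d) (hdM : d ≤ M)
    (hsum : c + d = a + b) : w c * w d ≤ w a * w b := by
  rcases le_total a b with hab | hba
  · exact h c a b d hca hab hbd hdM hsum
  · rw [mul_comm (w a)]
    exact h c b a d hcb hba had hdM (by omega)

noncomputable def Vr (w : ℕ → ℝ) (s : Finset ℕ) : ℝ :=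
  (∑ k ∈ s, (k : ℝ) ^ 2 * w k) / (∑ k ∈ s, w k)
    - ((∑ k ∈ s, (k : ℝ) * w k) / (∑ k ∈ s, w k)) ^ 2

lemma sum_odd_nat (d : ℕ) : ∑ j ∈ Icc 1 d, (2 * j - 1) = d ^ 2 := by
  induction d with
  | zero => simp
  | succ d ih =>
      rw [Finset.sum_Icc_succ_top (by omega), ih]
      ring_nf
      omega

lemma sum_odd (d : ℕ) : ∑ j ∈ Icc 1 d, ((2 * j - 1 : ℕ) : ℝ) = (d : ℝ) ^ 2 := by
  rw [← Nat.cast_sum, sum_odd_nat]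
  push_cast
  ring

theorem step_right (w : ℕ → ℝ) (n N : ℕ) (hn1 : 1 ≤ n) (hn : n ≤ N)
    (hpos : ∀ k, 0 < w k) (hlc : LC w (N + 1)) :
    Vr w (Icc n N) ≤ Vr w (Icc n (N + 1)) := by
  set T : ℕ → ℝ := fun j => ∑ k ∈ Icc n (N + 1 - j), w k with hT
  have hTnn : ∀ j, 0 ≤ T j := fun j => Finset.sum_nonneg fun k _ => (hpos k).le
  -- one-step log-concavity of tails
  have honestep : ∀ i j : ℕ, 1 ≤ i → i ≤ j → T (i - 1) * T (j + 1) ≤ T i * T j := by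
    intro i j hi hij
    by_cases hjL : j + 1 ≤ N + 1 - n
    swap
    · have hz : T (j + 1) = 0 := by
        rw [hT]
        simp only
        rw [Finset.Icc_eq_empty (by omega), Finset.sum_empty]
      rw [hz, mul_zero]
      exact mul_nonneg (hTnn i) (hTnn j)
    · -- main case
      have hiN : i ≤ N := by omega
      have hjN : j ≤ N - n := by omega
      have hTi : T (i - 1) = T i + w (N + 2 - i) := by
        have h1 : N + 1 - (i - 1) = (N + 1 - i) + 1 := by omega
        have h2 : (N + 1 - i) + 1 = N + 2 - i := by omega
        rw [hT]
        simp only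
        rw [h1, Finset.sum_Icc_succ_top (by omega), h2]
      have hTj : T j = T (j + 1) + w (N + 1 - j) := by
        have h1 : N + 1 - j = (N + 1 - (j + 1)) + 1 := by omega
        rw [hT]
        simp only
        rw [h1, Finset.sum_Icc_succ_top (by omega)]
      have key : w (N + 2 - i) * T (j + 1) ≤ w (N + 1 - j) * T i := by
        have hδ : 1 ≤ j + 1 - i := by omega
        set δ := j + 1 - i with hδdef
        calc w (N + 2 - i) * T (j + 1)
            = ∑ k ∈ Icc n (N + 1 - (j+1)), w (N + 2 - i) * w k := by
              rw [hT]; simp only [Finset.mul_sum]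
          _ ≤ ∑ k ∈ Icc n (N + 1 - (j+1)), w (N + 1 - j) * w (k + δ) := by
              apply Finset.sum_le_sum
              intro k hk
              simp only [Finset.mem_Icc] at hk
              rw [mul_comm (w (N + 2 - i))]
              apply LC.spread hlc k (N + 1 - j) (k + δ) (N + 2 - i) (by omega) (by omega)
                (by omega) (by omega) (by omega) (by omega)
          _ = ∑ k ∈ Icc (n + δ) (N + 1 - (j+1) + δ), w (N + 1 - j) * w k := by
              rw [← Finset.map_add_right_Icc, Finset.sum_map]
              rfl
          _ ≤ ∑ k ∈ Icc n (N + 1 - i), w (N + 1 - j) * w k := by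
              apply Finset.sum_le_sum_of_subset_of_nonneg
              · apply Finset.Icc_subset_Icc <;> omega
              · intro k _ _
                exact mul_nonneg (hpos _).le (hpos _).le
          _ = w (N + 1 - j) * T i := by rw [hT]; simp only [Finset.mul_sum]
      calc T (i - 1) * T (j + 1) = T i * T (j + 1) + w (N + 2 - i) * T (j + 1) := by
            rw [hTi]; ring
        _ ≤ T i * T (j + 1) + w (N + 1 - j) * T i := by linarith
        _ = T i * T j := by rw [hTj]; ring

  -- multi-step spread for tails
  have hspread : ∀ k i j : ℕ, 1 ≤ i → i ≤ j → k ≤ i →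
      T (i - k) * T (j + k) ≤ T i * T j := by
    intro k
    induction k with
    | zero => intro i j _ _ _; simp
    | succ k ih =>
        intro i j hi hij hk
        have h1 : T (i - (k+1)) * T (j + (k+1)) ≤ T (i - k) * T (j + k) := by
          have := honestep (i - k) (j + k) (by omega) (by omega)
          have e1 : i - k - 1 = i - (k + 1) := by omega
          have e2 : j + k + 1 = j + (k + 1) := by omega
          rwa [e1, e2] at this
        exact h1.trans (ih i j hi hij (by omega))
  have hkey1 : ∀ i j : ℕ, 1 ≤ i → 1 ≤ j → T 1 * T (i + j - 1) ≤ T i * T j := by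
    have base : ∀ i j : ℕ, 1 ≤ i → i ≤ j → T 1 * T (i + j - 1) ≤ T i * T j := by
      intro i j hi hij
      have := hspread (i - 1) i j hi hij (by omega)
      have e1 : i - (i - 1) = 1 := by omega
      have e2 : j + (i - 1) = i + j - 1 := by omega
      rwa [e1, e2] at this
    intro i j hi hj
    rcases le_total i j with h | h
    · exact base i j hi h
    · have := base j i hj h
      have e : j + i - 1 = i + j - 1 := by omega
      rw [e] at this
      linarith [this]
  have hkey0 : ∀ i j : ℕ, 1 ≤ i → 1 ≤ j → T 0 * T (i + j) ≤ T i * T j := by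
    have base : ∀ i j : ℕ, 1 ≤ i → i ≤ j → T 0 * T (i + j) ≤ T i * T j := by
      intro i j hi hij
      have := hspread i i j hi hij (le_refl i)
      have e1 : i - i = 0 := by omega
      have e2 : j + i = i + j := by omega
      rwa [e1, e2] at this
    intro i j hi hj
    rcases le_total i j with h | h
    · exact base i j hi h
    · have := base j i hj h
      have e : j + i = i + j := by omega
      rw [e] at this
      linarith [this]
  set L := N + 1 - n with hLdef
  set M1 : ℝ := ∑ j ∈ Icc 1 L, T j with hM1def
  set M2 : ℝ := ∑ j ∈ Icc 1 L, ((2 * j - 1 : ℕ) : ℝ) * T j with hM2def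
  have hcomm : ∀ (j k : ℕ), (j ∈ Icc 1 L ∧ k ∈ Icc n (N + 1 - j)) ↔
      (j ∈ Icc 1 (N + 1 - k) ∧ k ∈ Icc n (N + 1)) := by
    intro j k
    simp only [Finset.mem_Icc, hLdef]
    omega
  have ident1 : M1 = ∑ k ∈ Icc n (N + 1), ((N + 1 - k : ℕ) : ℝ) * w k := by
    rw [hM1def, hT]
    rw [Finset.sum_comm' hcomm]
    apply Finset.sum_congr rfl
    intro k _
    rw [Finset.sum_const, Nat.card_Icc, nsmul_eq_mul]
    congr 2 <;> omega
  have ident2 : M2 = ∑ k ∈ Icc n (N + 1), ((N + 1 - k : ℕ) : ℝ) ^ 2 * w k := by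
    rw [hM2def, hT]
    simp only [← Finset.sum_mul, Finset.mul_sum]
    rw [Finset.sum_comm' hcomm]
    apply Finset.sum_congr rfl
    intro k _
    rw [← Finset.sum_mul, sum_odd]
  -- abbreviations for moments on the two windows
  set S : ℝ := ∑ k ∈ Icc n N, w k with hSdef
  set B : ℝ := ∑ k ∈ Icc n N, (k : ℝ) * w k with hBdef
  set C : ℝ := ∑ k ∈ Icc n N, (k : ℝ) ^ 2 * w k with hCdef
  set S' : ℝ := ∑ k ∈ Icc n (N + 1), w k with hS'def
  set B' : ℝ := ∑ k ∈ Icc n (N + 1), (k : ℝ) * w k with hB'def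
  set C' : ℝ := ∑ k ∈ Icc n (N + 1), (k : ℝ) ^ 2 * w k with hC'def
  have hT0 : T 0 = S' := by rw [hT]; simp [hS'def]
  have hT1 : T 1 = S := by rw [hT]; simp [hSdef]
  have hSplit : S' = S + w (N + 1) := by
    rw [hS'def, hSdef, Finset.sum_Icc_succ_top (by omega)]
  have hBsplit : B' = B + ((N + 1 : ℕ) : ℝ) * w (N + 1) := by
    rw [hB'def, hBdef, Finset.sum_Icc_succ_top (by omega)]
  have hCsplit : C' = C + ((N + 1 : ℕ) : ℝ) ^ 2 * w (N + 1) := by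
    rw [hC'def, hCdef, Finset.sum_Icc_succ_top (by omega)]
  have hM1S : M1 = ((N + 1 : ℕ) : ℝ) * S' - B' := by
    rw [ident1]
    have h : ∀ k ∈ Icc n (N + 1), ((N + 1 - k : ℕ) : ℝ) * w k
        = ((N + 1 : ℕ) : ℝ) * w k - (k : ℝ) * w k := by
      intro k hk
      simp only [Finset.mem_Icc] at hk
      rw [Nat.cast_sub (by omega)]
      ring
    rw [Finset.sum_congr rfl h, Finset.sum_sub_distrib, ← Finset.mul_sum]
  have hM2S : M2 = ((N + 1 : ℕ) : ℝ) ^ 2 * S' - 2 * ((N + 1 : ℕ) : ℝ) * B' + C' := by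
    rw [ident2]
    have h : ∀ k ∈ Icc n (N + 1), ((N + 1 - k : ℕ) : ℝ) ^ 2 * w k
        = ((N + 1 : ℕ) : ℝ) ^ 2 * w k - 2 * ((N + 1 : ℕ) : ℝ) * ((k : ℝ) * w k)
          + (k : ℝ) ^ 2 * w k := by
      intro k hk
      simp only [Finset.mem_Icc] at hk
      rw [Nat.cast_sub (by omega)]
      ring
    rw [Finset.sum_congr rfl h, Finset.sum_add_distrib, Finset.sum_sub_distrib,
      ← Finset.mul_sum, ← Finset.mul_sum]
  have hSpos : 0 < S := by
    rw [hSdef]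
    apply Finset.sum_pos (fun k _ => hpos k)
    exact Finset.nonempty_Icc.2 hn
  have hS'pos : 0 < S' := by
    rw [hS'def]
    apply Finset.sum_pos (fun k _ => hpos k)
    exact Finset.nonempty_Icc.2 (by omega)
  have hVrN : Vr w (Icc n N) = (S * C - B ^ 2) / S ^ 2 := by
    rw [Vr, ← hSdef, ← hBdef, ← hCdef]
    field_simp
  have hVrN' : Vr w (Icc n (N + 1)) = (S' * C' - B' ^ 2) / S' ^ 2 := by
    rw [Vr, ← hS'def, ← hB'def, ← hC'def]
    field_simp
  -- from now on, treat everything as opaque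
  clear_value T M1 M2 S B C S' B' C'
  -- the key cubic inequality
  have hB1 : ∑ s ∈ Icc 1 L, (s : ℝ) * T s ≤ ∑ i ∈ Icc 1 L, ∑ j ∈ Icc 1 L, T (i + j - 1) := by
    have inner : ∀ i ∈ Icc 1 L, ∑ s ∈ Icc i L, T s ≤ ∑ j ∈ Icc 1 L, T (i + j - 1) := by
      intro i hi
      simp only [Finset.mem_Icc] at hi
      have e : ∑ j ∈ Icc 1 (L + 1 - i), T (i + j - 1) = ∑ s ∈ Icc i L, T s := by
        have h : ∀ j ∈ Icc 1 (L + 1 - i), T (i + j - 1) = T (j + (i - 1)) := by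
          intro j hj; congr 1; omega
        rw [Finset.sum_congr rfl h,
          show Icc i L = Finset.map (addRightEmbedding (i - 1)) (Icc 1 (L + 1 - i)) by
            rw [Finset.map_add_right_Icc]; congr 1 <;> omega,
          Finset.sum_map]
        rfl
      rw [← e]
      apply Finset.sum_le_sum_of_subset_of_nonneg
      · apply Finset.Icc_subset_Icc <;> omega
      · intro j _ _; exact hTnn _
    have comm : ∑ s ∈ Icc 1 L, (s : ℝ) * T s = ∑ i ∈ Icc 1 L, ∑ s ∈ Icc i L, T s := by
      have hc : ∀ (i s : ℕ), (i ∈ Icc 1 L ∧ s ∈ Icc i L) ↔ (i ∈ Icc 1 s ∧ s ∈ Icc 1 L) := by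
        intro i s
        simp only [Finset.mem_Icc]
        omega
      rw [Finset.sum_comm' hc]
      apply Finset.sum_congr rfl
      intro s _
      rw [Finset.sum_const, Nat.card_Icc, nsmul_eq_mul]
      congr 2 <;> omega
    rw [comm]
    exact Finset.sum_le_sum inner
  have hB2 : ∑ s ∈ Icc 1 L, ((s - 1 : ℕ) : ℝ) * T s ≤
      ∑ i ∈ Icc 1 L, ∑ j ∈ Icc 1 L, T (i + j) := by
    have inner : ∀ i ∈ Icc 1 L, ∑ s ∈ Icc (i + 1) L, T s ≤ ∑ j ∈ Icc 1 L, T (i + j) := by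
      intro i hi
      simp only [Finset.mem_Icc] at hi
      have e : ∑ j ∈ Icc 1 (L - i), T (i + j) = ∑ s ∈ Icc (i + 1) L, T s := by
        have h : ∀ j ∈ Icc 1 (L - i), T (i + j) = T (j + i) := by
          intro j hj; congr 1; omega
        rw [Finset.sum_congr rfl h,
          show Icc (i + 1) L = Finset.map (addRightEmbedding i) (Icc 1 (L - i)) by
            rw [Finset.map_add_right_Icc]; congr 1 <;> omega,
          Finset.sum_map]
        rfl
      rw [← e]
      apply Finset.sum_le_sum_of_subset_of_nonneg
      · apply Finset.Icc_subset_Icc <;> omega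
      · intro j _ _; exact hTnn _
    have comm : ∑ s ∈ Icc 1 L, ((s - 1 : ℕ) : ℝ) * T s
        = ∑ i ∈ Icc 1 L, ∑ s ∈ Icc (i + 1) L, T s := by
      have hc : ∀ (i s : ℕ), (i ∈ Icc 1 L ∧ s ∈ Icc (i + 1) L) ↔ (i ∈ Icc 1 (s - 1) ∧ s ∈ Icc 1 L) := by
        intro i s
        simp only [Finset.mem_Icc]
        omega
      rw [Finset.sum_comm' hc]
      apply Finset.sum_congr rfl
      intro s _
      rw [Finset.sum_const, Nat.card_Icc, nsmul_eq_mul]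
      congr 2 <;> omega
    rw [comm]
    exact Finset.sum_le_sum inner
  have key : T 0 * T 1 * M2 ≤ (T 0 + T 1) * M1 ^ 2 := by
    have hsq : M1 ^ 2 = ∑ i ∈ Icc 1 L, ∑ j ∈ Icc 1 L, T i * T j := by
      rw [sq, hM1def, Finset.sum_mul_sum]
    have hM2split : M2 = (∑ s ∈ Icc 1 L, (s : ℝ) * T s)
        + ∑ s ∈ Icc 1 L, ((s - 1 : ℕ) : ℝ) * T s := by
      rw [hM2def, ← Finset.sum_add_distrib]
      apply Finset.sum_congr rfl
      intro s hs
      simp only [Finset.mem_Icc] at hs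
      have h1 : ((2 * s - 1 : ℕ) : ℝ) = (s : ℝ) + ((s - 1 : ℕ) : ℝ) := by
        have h : (2 * s - 1 : ℕ) = s + (s - 1) := by omega
        rw [h, Nat.cast_add]
      rw [h1]; ring
    have hmul : 0 ≤ T 0 * T 1 := mul_nonneg (hTnn 0) (hTnn 1)
    have expand : ∑ i ∈ Icc 1 L, ∑ j ∈ Icc 1 L, (T (i + j - 1) + T (i + j))
        = (∑ i ∈ Icc 1 L, ∑ j ∈ Icc 1 L, T (i + j - 1))
          + (∑ i ∈ Icc 1 L, ∑ j ∈ Icc 1 L, T (i + j)) := by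
      rw [← Finset.sum_add_distrib]
      apply Finset.sum_congr rfl
      intro i _
      rw [← Finset.sum_add_distrib]
    have step1 : ∑ i ∈ Icc 1 L, ∑ j ∈ Icc 1 L, (T 0 * T 1 * (T (i + j - 1) + T (i + j)))
        ≤ ∑ i ∈ Icc 1 L, ∑ j ∈ Icc 1 L, ((T 0 + T 1) * (T i * T j)) := by
      apply Finset.sum_le_sum
      intro i hi
      apply Finset.sum_le_sum
      intro j hj
      simp only [Finset.mem_Icc] at hi hj
      have h1 := hkey1 i j hi.1 hj.1
      have h0 := hkey0 i j hi.1 hj.1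
      nlinarith [h1, h0, hTnn 0, hTnn 1]
    calc T 0 * T 1 * M2
        ≤ T 0 * T 1 * (∑ i ∈ Icc 1 L, ∑ j ∈ Icc 1 L, (T (i + j - 1) + T (i + j))) := by
          apply mul_le_mul_of_nonneg_left _ hmul
          rw [expand, hM2split]
          exact add_le_add hB1 hB2
      _ = ∑ i ∈ Icc 1 L, ∑ j ∈ Icc 1 L, (T 0 * T 1 * (T (i + j - 1) + T (i + j))) := by
          rw [Finset.mul_sum]
          apply Finset.sum_congr rfl
          intro i _
          rw [Finset.mul_sum]
      _ ≤ ∑ i ∈ Icc 1 L, ∑ j ∈ Icc 1 L, ((T 0 + T 1) * (T i * T j)) := step1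
      _ = (T 0 + T 1) * ∑ i ∈ Icc 1 L, ∑ j ∈ Icc 1 L, T i * T j := by
          rw [Finset.mul_sum]
          apply Finset.sum_congr rfl
          intro i _
          rw [Finset.mul_sum]
      _ = (T 0 + T 1) * M1 ^ 2 := by rw [hsq]
  -- final assembly
  have e1 : S * C - B ^ 2 = S * M2 - M1 ^ 2 := by
    rw [hM1S, hM2S, hSplit, hBsplit, hCsplit]; ring
  have e2 : S' * C' - B' ^ 2 = S' * M2 - M1 ^ 2 := by
    rw [hM1S, hM2S]; ring
  rw [hVrN, hVrN', div_le_div_iff₀ (by positivity) (by positivity), e1, e2]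
  rw [hT0, hT1] at key
  have hwnn := (hpos (N + 1)).le
  have key2 : S * S' * M2 ≤ (S + S') * M1 ^ 2 := by nlinarith [key]
  have prod : 0 ≤ (S' - S) * ((S + S') * M1 ^ 2 - S * S' * M2) := by
    apply mul_nonneg
    · rw [hSplit]; linarith
    · linarith [key2]
  nlinarith [prod]

open MeasureTheory ProbabilityTheory
open scoped ENNReal NNReal

lemma measure_restrict_eq (w : ℕ → ℝ) (μ : Measure ℝ)
    (hμ : μ = Measure.sum (fun k : ℕ => ENNReal.ofReal (w k) • Measure.dirac (k : ℝ)))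
    {I : Set ℝ} (hI : MeasurableSet I) {F : Finset ℕ}
    (hF : ∀ k : ℕ, (k : ℝ) ∈ I ↔ k ∈ F) :
    μ.restrict I = ∑ k ∈ F, ENNReal.ofReal (w k) • Measure.dirac (k : ℝ) := by
  classical
  rw [hμ, Measure.restrict_sum_of_countable]
  have h1 : ∀ k : ℕ, (ENNReal.ofReal (w k) • Measure.dirac (k : ℝ)).restrict I
      = if k ∈ F then ENNReal.ofReal (w k) • Measure.dirac (k : ℝ) else 0 := by
    intro k
    rw [Measure.restrict_smul, MeasureTheory.restrict_dirac' hI]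
    by_cases h : (k : ℝ) ∈ I
    · rw [if_pos h, if_pos ((hF k).1 h)]
    · rw [if_neg h, if_neg (fun hk => h ((hF k).2 hk)), smul_zero]
  have h2 : (Measure.sum fun k : ℕ => (ENNReal.ofReal (w k) • Measure.dirac (k : ℝ)).restrict I)
      = ∑ k ∈ F, ((ENNReal.ofReal (w k) • Measure.dirac (k : ℝ)).restrict I) := by
    ext s hs
    rw [Measure.sum_apply _ hs, Measure.finset_sum_apply]
    refine tsum_eq_sum ?_
    intro k hk
    rw [h1 k, if_neg hk]
    rfl
  rw [h2]
  exact Finset.sum_congr rfl fun k hk => by rw [h1 k, if_pos hk]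

lemma measure_apply_eq (w : ℕ → ℝ) (hw : ∀ k, 0 ≤ w k) (μ : Measure ℝ)
    (hμ : μ = Measure.sum (fun k : ℕ => ENNReal.ofReal (w k) • Measure.dirac (k : ℝ)))
    {I : Set ℝ} (hI : MeasurableSet I) {F : Finset ℕ}
    (hF : ∀ k : ℕ, (k : ℝ) ∈ I ↔ k ∈ F) :
    μ I = ENNReal.ofReal (∑ k ∈ F, w k) := by
  rw [← Measure.restrict_apply_univ, measure_restrict_eq w μ hμ hI hF,
    Measure.finset_sum_apply, ENNReal.ofReal_sum_of_nonneg (fun k _ => hw k)]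
  refine Finset.sum_congr rfl fun k _ => ?_
  simp [Measure.smul_apply]

lemma variance_cond (w : ℕ → ℝ) (hw : ∀ k, 0 < w k) (μ : Measure ℝ)
    (hμ : μ = Measure.sum (fun k : ℕ => ENNReal.ofReal (w k) • Measure.dirac (k : ℝ)))
    {I : Set ℝ} (hI : MeasurableSet I) {F : Finset ℕ}
    (hF : ∀ k : ℕ, (k : ℝ) ∈ I ↔ k ∈ F) (hne : F.Nonempty) :
    variance id (μ[|I]) = Vr w F := by
  classical
  set S : ℝ := ∑ k ∈ F, w k with hSdef
  have hSpos : 0 < S := Finset.sum_pos (fun k _ => hw k) hne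
  have hcond : μ[|I] = ∑ k ∈ F, ENNReal.ofReal (w k / S) • Measure.dirac (k : ℝ) := by
    rw [ProbabilityTheory.cond, measure_apply_eq w (fun k => (hw k).le) μ hμ hI hF,
      measure_restrict_eq w μ hμ hI hF, Finset.smul_sum]
    refine Finset.sum_congr rfl fun k _ => ?_
    rw [smul_smul]
    congr 1
    rw [ENNReal.ofReal_div_of_pos hSpos, ENNReal.div_eq_inv_mul]
  have hInt : ∀ k ∈ F, Integrable id (ENNReal.ofReal (w k / S) • Measure.dirac (k : ℝ)) := by
    intro k _
    refine Integrable.smul_measure ?_ ENNReal.ofReal_ne_top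
    exact (integrable_const ((k : ℝ))).congr (ae_eq_dirac id).symm
  set B : ℝ := ∑ k ∈ F, (k : ℝ) * w k with hBdef
  have hmean : (∫ x, id x ∂(μ[|I])) = B / S := by
    rw [hcond, integral_finset_sum_measure hInt]
    have h : ∀ k ∈ F, ∫ x, id x ∂(ENNReal.ofReal (w k / S) • Measure.dirac (k : ℝ))
        = (k : ℝ) * w k / S := by
      intro k _
      rw [integral_smul_measure, integral_dirac,
        ENNReal.toReal_ofReal (div_nonneg (hw k).le hSpos.le)]
      simp only [id, smul_eq_mul]
      ring
    rw [Finset.sum_congr rfl h, ← Finset.sum_div, hBdef]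
  have hev : evariance id (μ[|I]) = ∑ k ∈ F,
      ENNReal.ofReal ((w k / S) * ((k : ℝ) - B / S) ^ 2) := by
    rw [evariance, hmean, hcond, lintegral_finset_sum_measure]
    refine Finset.sum_congr rfl fun k _ => ?_
    rw [lintegral_smul_measure, lintegral_dirac]
    have hnorm : ‖id (k : ℝ) - B / S‖ₑ ^ 2
        = ENNReal.ofReal (((k : ℝ) - B / S) ^ 2) := by
      rw [Real.enorm_eq_ofReal_abs, ← ENNReal.ofReal_pow (abs_nonneg _), sq_abs]
      simp [id]
    rw [hnorm, smul_eq_mul, ← ENNReal.ofReal_mul (div_nonneg (hw k).le hSpos.le)]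
  have hvar : variance id (μ[|I]) = ∑ k ∈ F, (w k / S) * ((k : ℝ) - B / S) ^ 2 := by
    rw [ProbabilityTheory.variance, hev, ENNReal.toReal_sum (fun k _ => ENNReal.ofReal_ne_top)]
    refine Finset.sum_congr rfl fun k _ => ?_
    exact ENNReal.toReal_ofReal (mul_nonneg (div_nonneg (hw k).le hSpos.le) (sq_nonneg _))
  rw [hvar, Vr, ← hSdef, ← hBdef]
  have expand : ∀ k ∈ F, (w k / S) * ((k : ℝ) - B / S) ^ 2
      = (1 / S) * ((k : ℝ) ^ 2 * w k) - (2 * B / S ^ 2) * ((k : ℝ) * w k)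
        + (B ^ 2 / S ^ 3) * w k := by
    intro k _
    field_simp
    ring
  rw [Finset.sum_congr rfl expand]
  rw [Finset.sum_add_distrib, Finset.sum_sub_distrib, ← Finset.mul_sum, ← Finset.mul_sum,
    ← Finset.mul_sum, ← hBdef, ← hSdef]
  field_simp
  ring

lemma LC.reflect {w : ℕ → ℝ} {M : ℕ} (h : LC w M) {C : ℕ} (hC : C ≤ M) :
    LC (fun y => w (C - y)) C := by
  intro c a b d hca hab hbd hdC hsum
  have key := LC.spread h (C - d) (C - b) (C - a) (C - c)
    (by omega) (by omega) (by omega) (by omega) (by omega) (by omega)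
  simp only
  nlinarith [key]

lemma Vr_reflect (w : ℕ → ℝ) (Cc a b : ℕ) (hab : a ≤ b) (hb : b ≤ Cc)
    (hS : (∑ k ∈ Icc a b, w k) ≠ 0) :
    Vr (fun y => w (Cc - y)) (Icc (Cc - b) (Cc - a)) = Vr w (Icc a b) := by
  have key : ∀ f : ℕ → ℝ, (∑ y ∈ Icc (Cc - b) (Cc - a), f y) = ∑ k ∈ Icc a b, f (Cc - k) := by
    intro f
    refine Finset.sum_nbij' (i := fun y => Cc - y) (j := fun k => Cc - k) ?_ ?_ ?_ ?_ ?_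
    · intro y hy; simp only [Finset.mem_Icc] at *; omega
    · intro k hk; simp only [Finset.mem_Icc] at *; omega
    · intro y hy; simp only [Finset.mem_Icc] at hy; omega
    · intro k hk; simp only [Finset.mem_Icc] at hk; omega
    · intro y hy
      simp only [Finset.mem_Icc] at hy
      congr 1
      omega
  have h1 : (∑ y ∈ Icc (Cc - b) (Cc - a), w (Cc - y)) = ∑ k ∈ Icc a b, w k := by
    rw [key (fun y => w (Cc - y))]
    refine Finset.sum_congr rfl fun k hk => ?_
    simp only [Finset.mem_Icc] at hk
    congr 1
    omega
  have h2 : (∑ y ∈ Icc (Cc - b) (Cc - a), (y : ℝ) * w (Cc - y))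
      = ∑ k ∈ Icc a b, ((Cc : ℝ) - (k : ℝ)) * w k := by
    rw [key (fun y => (y : ℝ) * w (Cc - y))]
    refine Finset.sum_congr rfl fun k hk => ?_
    simp only [Finset.mem_Icc] at hk
    have e1 : Cc - (Cc - k) = k := by omega
    have e2 : ((Cc - k : ℕ) : ℝ) = (Cc : ℝ) - (k : ℝ) := by
      rw [Nat.cast_sub (by omega)]
    rw [e1, e2]
  have h3 : (∑ y ∈ Icc (Cc - b) (Cc - a), (y : ℝ) ^ 2 * w (Cc - y))
      = ∑ k ∈ Icc a b, ((Cc : ℝ) - (k : ℝ)) ^ 2 * w k := by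
    rw [key (fun y => (y : ℝ) ^ 2 * w (Cc - y))]
    refine Finset.sum_congr rfl fun k hk => ?_
    simp only [Finset.mem_Icc] at hk
    have e1 : Cc - (Cc - k) = k := by omega
    have e2 : ((Cc - k : ℕ) : ℝ) = (Cc : ℝ) - (k : ℝ) := by
      rw [Nat.cast_sub (by omega)]
    rw [e1, e2]
  have h2' : (∑ k ∈ Icc a b, ((Cc : ℝ) - (k : ℝ)) * w k)
      = (Cc : ℝ) * (∑ k ∈ Icc a b, w k) - ∑ k ∈ Icc a b, (k : ℝ) * w k := by
    rw [Finset.mul_sum, ← Finset.sum_sub_distrib]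
    exact Finset.sum_congr rfl fun k _ => by ring
  have h3' : (∑ k ∈ Icc a b, ((Cc : ℝ) - (k : ℝ)) ^ 2 * w k)
      = (Cc : ℝ) ^ 2 * (∑ k ∈ Icc a b, w k) - 2 * (Cc : ℝ) * (∑ k ∈ Icc a b, (k : ℝ) * w k)
        + ∑ k ∈ Icc a b, (k : ℝ) ^ 2 * w k := by
    rw [Finset.mul_sum, Finset.mul_sum, ← Finset.sum_sub_distrib, ← Finset.sum_add_distrib]
    exact Finset.sum_congr rfl fun k _ => by ring
  rw [Vr, Vr, h1, h2, h3, h2', h3']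
  field_simp
  ring

lemma mono_right (w : ℕ → ℝ) (n N1 N2 : ℕ) (hn1 : 1 ≤ n) (hn : n ≤ N1) (h12 : N1 ≤ N2)
    (hpos : ∀ k, 0 < w k) (hlc : LC w N2) :
    Vr w (Icc n N1) ≤ Vr w (Icc n N2) := by
  induction N2, h12 using Nat.le_induction with
  | base => exact le_rfl
  | succ N hle ih =>
      exact (ih (hlc.mono (by omega))).trans
        (step_right w n N hn1 (hn.trans hle) hpos hlc)

lemma mono_left (w : ℕ → ℝ) (n1 n2 N : ℕ) (h21 : n2 ≤ n1) (hn : n1 ≤ N)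
    (hpos : ∀ k, 0 < w k) (hlc : LC w (N + n2 + 1)) :
    Vr w (Icc n1 N) ≤ Vr w (Icc n2 N) := by
  set Cc := N + n2 + 1 with hCc
  have hS1 : (∑ k ∈ Icc n1 N, w k) ≠ 0 :=
    (Finset.sum_pos (fun k _ => hpos k) (Finset.nonempty_Icc.2 hn)).ne'
  have hS2 : (∑ k ∈ Icc n2 N, w k) ≠ 0 :=
    (Finset.sum_pos (fun k _ => hpos k) (Finset.nonempty_Icc.2 (h21.trans hn))).ne'
  have hr1 := Vr_reflect w Cc n1 N hn (by omega) hS1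
  have hr2 := Vr_reflect w Cc n2 N (h21.trans hn) (by omega) hS2
  rw [← hr1, ← hr2]
  have he1 : Cc - N = n2 + 1 := by omega
  have he2 : Cc - n2 = N + 1 := by omega
  rw [he1, he2]
  have := mono_right (fun y => w (Cc - y)) (n2 + 1) (Cc - n1) (N + 1)
    (by omega) (by omega) (by omega) (fun k => hpos _)
    ((hlc.reflect (le_of_eq hCc.symm)).mono (by omega))
  exact this

lemma fact_aux : ∀ (t c b : ℕ), c ≤ b →
    (c + t).factorial * b.factorial ≤ c.factorial * (b + t).factorial := by
  intro t
  induction t with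
  | zero => intro c b _; simp [Nat.mul_comm]
  | succ t ih =>
      intro c b hcb
      calc (c + (t + 1)).factorial * b.factorial
          = (c + t + 1) * ((c + t).factorial * b.factorial) := by
            rw [show c + (t + 1) = (c + t) + 1 by omega, Nat.factorial_succ]
            ring
        _ ≤ (c + t + 1) * (c.factorial * (b + t).factorial) :=
            Nat.mul_le_mul_left _ (ih c b hcb)
        _ ≤ (b + t + 1) * (c.factorial * (b + t).factorial) :=
            Nat.mul_le_mul_right _ (by omega)
        _ = c.factorial * (b + (t + 1)).factorial := by
            rw [show b + (t + 1) = (b + t) + 1 by omega, Nat.factorial_succ]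
            ring

lemma poisson_pos (m : ℝ) (hm : 0 < m) (k : ℕ) :
    0 < Real.exp (-m) * m ^ k / (Nat.factorial k : ℝ) :=
  div_pos (mul_pos (Real.exp_pos _) (pow_pos hm k))
    (Nat.cast_pos.2 (Nat.factorial_pos k))

lemma poisson_LC (m : ℝ) (hm : 0 < m) (M : ℕ) :
    LC (fun k => Real.exp (-m) * m ^ k / (Nat.factorial k : ℝ)) M := by
  intro c a b d hca hab hbd _ hsum
  have hfact : a.factorial * b.factorial ≤ c.factorial * d.factorial := by
    have h1 : a = c + (a - c) := by omega
    have h2 : d = b + (a - c) := by omega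
    calc a.factorial * b.factorial = (c + (a - c)).factorial * b.factorial := by rw [← h1]
      _ ≤ c.factorial * (b + (a - c)).factorial := fact_aux (a - c) c b (by omega)
      _ = c.factorial * d.factorial := by rw [← h2]
  have hfc : (0 : ℝ) < (c.factorial : ℝ) := Nat.cast_pos.2 (Nat.factorial_pos c)
  have hfd : (0 : ℝ) < (d.factorial : ℝ) := Nat.cast_pos.2 (Nat.factorial_pos d)
  have hfa : (0 : ℝ) < (a.factorial : ℝ) := Nat.cast_pos.2 (Nat.factorial_pos a)
  have hfb : (0 : ℝ) < (b.factorial : ℝ) := Nat.cast_pos.2 (Nat.factorial_pos b)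
  have hE : (0 : ℝ) < Real.exp (-m) := Real.exp_pos _
  simp only
  have e1 : Real.exp (-m) * m ^ c / (c.factorial : ℝ) * (Real.exp (-m) * m ^ d / (d.factorial : ℝ))
      = (Real.exp (-m) * Real.exp (-m) * m ^ (a + b)) / ((c.factorial : ℝ) * (d.factorial : ℝ)) := by
    rw [← hsum, pow_add]
    field_simp
  have e2 : Real.exp (-m) * m ^ a / (a.factorial : ℝ) * (Real.exp (-m) * m ^ b / (b.factorial : ℝ))
      = (Real.exp (-m) * Real.exp (-m) * m ^ (a + b)) / ((a.factorial : ℝ) * (b.factorial : ℝ)) := by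
    rw [pow_add]
    field_simp
  rw [e1, e2]
  apply div_le_div_of_nonneg_left
  · positivity
  · positivity
  · exact_mod_cast hfact.trans_eq (by ring)

end PoissonAux

open MeasureTheory ProbabilityTheory Set
open PoissonAux

/-- Let `X` be Poisson with mean `m > 0`. Then
`Var(X | m < X < b)` is increasing in `b` over `{b > m : P(m < X < b) > 0}`, and
`Var(X | a < X < m)` is decreasing in `a` over `{a < m : P(a < X < m) > 0}`. -/
theorem poisson_conditional_variance_monotone
    (m : ℝ) (hm : 0 < m)
    (μ : Measure ℝ)
    (hμ : μ = Measure.sum (fun k : ℕ =>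
      ENNReal.ofReal (Real.exp (-m) * m ^ k / (Nat.factorial k : ℝ)) •
        Measure.dirac (k : ℝ))) :
    MonotoneOn (fun b => variance id (μ[|Ioo m b]))
      {b : ℝ | m < b ∧ 0 < μ (Ioo m b)} ∧
    AntitoneOn (fun a => variance id (μ[|Ioo a m]))
      {a : ℝ | a < m ∧ 0 < μ (Ioo a m)} := by
  set w : ℕ → ℝ := fun k => Real.exp (-m) * m ^ k / (Nat.factorial k : ℝ) with hw
  have hp : ∀ k, 0 < w k := poisson_pos m hm
  have hp' : ∀ k, 0 ≤ w k := fun k => (hp k).le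
  -- characterizations of the windows
  have hlow : ∀ (a : ℝ) (k : ℕ), (a < (k : ℝ)) ↔ ((⌊a⌋ + 1).toNat ≤ k) := by
    intro a k
    rw [show ((k : ℝ)) = (((k : ℕ) : ℤ) : ℝ) by push_cast; ring, ← Int.floor_lt]
    omega
  have hhigh : ∀ (b : ℝ), 0 < b → ∀ (k : ℕ), ((k : ℝ) < b) ↔ (k ≤ ⌈b⌉.toNat - 1) := by
    intro b hb k
    have hceil : (0 : ℤ) < ⌈b⌉ := Int.lt_ceil.mpr (by exact_mod_cast hb)
    rw [show ((k : ℝ)) = (((k : ℕ) : ℤ) : ℝ) by push_cast; ring, ← Int.lt_ceil]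
    omega
  have hne_of_pos : ∀ (I : Set ℝ), MeasurableSet I → (∀ k : ℕ, ((k : ℝ) ∈ I ↔ k ∈ (∅ : Finset ℕ)))
      → ¬ (0 < μ I) := by
    intro I hI hF
    rw [measure_apply_eq w hp' μ hμ hI hF]
    simp
  constructor
  · -- monotone part
    intro b1 hb1 b2 hb2 h12
    simp only [Set.mem_setOf_eq] at hb1 hb2
    obtain ⟨hmb1, hμ1⟩ := hb1
    obtain ⟨hmb2, hμ2⟩ := hb2
    set n : ℕ := (⌊m⌋ + 1).toNat with hn
    have hfm : (0 : ℤ) ≤ ⌊m⌋ := Int.floor_nonneg.mpr hm.le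
    have hn1 : 1 ≤ n := by omega
    have hIoo : ∀ (b : ℝ), m < b → ∀ k : ℕ,
        ((k : ℝ) ∈ Set.Ioo m b ↔ k ∈ Finset.Icc n (⌈b⌉.toNat - 1)) := by
      intro b hb k
      simp only [Set.mem_Ioo, Finset.mem_Icc]
      rw [hlow m k, hhigh b (hm.trans hb) k]
    -- nonemptiness
    have hne1 : n ≤ ⌈b1⌉.toNat - 1 := by
      by_contra hcon
      apply absurd hμ1
      have : Finset.Icc n (⌈b1⌉.toNat - 1) = ∅ := Finset.Icc_eq_empty (by omega)
      apply hne_of_pos _ measurableSet_Ioo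
      intro k
      rw [hIoo b1 hmb1 k, this]
    have hN12 : ⌈b1⌉.toNat - 1 ≤ ⌈b2⌉.toNat - 1 := by
      have := Int.ceil_le_ceil (R := ℝ) h12
      omega
    simp only
    rw [variance_cond w hp μ hμ measurableSet_Ioo (hIoo b1 hmb1)
        (Finset.nonempty_Icc.2 hne1),
      variance_cond w hp μ hμ measurableSet_Ioo (hIoo b2 hmb2)
        (Finset.nonempty_Icc.2 (hne1.trans hN12))]
    exact mono_right w n _ _ hn1 hne1 hN12 hp (poisson_LC m hm _)
  · -- antitone part
    intro a1 ha1 a2 ha2 h12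
    simp only [Set.mem_setOf_eq] at ha1 ha2
    obtain ⟨hma1, hμ1⟩ := ha1
    obtain ⟨hma2, hμ2⟩ := ha2
    set N : ℕ := ⌈m⌉.toNat - 1 with hN
    have hIoo : ∀ (a : ℝ), a < m → ∀ k : ℕ,
        ((k : ℝ) ∈ Set.Ioo a m ↔ k ∈ Finset.Icc ((⌊a⌋ + 1).toNat) N) := by
      intro a ha k
      simp only [Set.mem_Ioo, Finset.mem_Icc]
      rw [hlow a k, hhigh m hm k]
    have hn12 : (⌊a1⌋ + 1).toNat ≤ (⌊a2⌋ + 1).toNat := by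
      have := Int.floor_le_floor (R := ℝ) h12
      omega
    have hne2 : (⌊a2⌋ + 1).toNat ≤ N := by
      by_contra hcon
      apply absurd hμ2
      have : Finset.Icc ((⌊a2⌋ + 1).toNat) N = ∅ := Finset.Icc_eq_empty (by omega)
      apply hne_of_pos _ measurableSet_Ioo
      intro k
      rw [hIoo a2 hma2 k, this]
    simp only
    rw [variance_cond w hp μ hμ measurableSet_Ioo (hIoo a1 hma1)
        (Finset.nonempty_Icc.2 (hn12.trans hne2)),
      variance_cond w hp μ hμ measurableSet_Ioo (hIoo a2 hma2)
        (Finset.nonempty_Icc.2 hne2)]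
    exact mono_left w _ _ N hn12 hne2 hp (poisson_LC m hm _)
end

section
/- Let X₁ and X₂ be independent random variables each with a log-concave, differentiable density f, let b > 0 with F(b) = P(0 < X < b) > 0, and let g(u; b) = ∫ᵤᵇ f(x) f(x − u) dx / F(b)² be the conditional density of U = X₁ − X₂ given 0 < X₁, X₂ < b. Then for each b > 0, g(u; b) is decreasing in u for u ∈ [0, b]. -/
open MeasureTheory Set

/-- Let `X₁, X₂` be i.i.d. with log-concave differentiable density
`f`, let `F x = P(0 < X < x)`, let `b > 0` with `F b > 0`, and let
`g u b = (∫ x in u..b, f x * f (x - u)) / F(b)²` be the conditional density of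
`U = X₁ - X₂` given `0 < X₁, X₂ < b`. Then `u ↦ g u b` is decreasing on `[0, b]`. -/
theorem conditional_difference_density_decreasing
    (f : ℝ → ℝ) (hf0 : ∀ x, 0 ≤ f x) (hfint : ∫ x, f x = 1)
    (hlc : ∀ x y p q : ℝ, 0 ≤ p → 0 ≤ q → p + q = 1 →
      f x ^ p * f y ^ q ≤ f (p * x + q * y))
    (hdiff : Differentiable ℝ f)
    (F : ℝ → ℝ) (hF : ∀ x, F x = ∫ t in Ioo 0 x, f t)
    (b : ℝ) (hb : 0 < b) (hFb : 0 < F b)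
    (g : ℝ → ℝ → ℝ)
    (hg : ∀ u b, g u b = (∫ x in u..b, f x * f (x - u)) / (F b) ^ 2) :
    AntitoneOn (fun u => g u b) (Icc 0 b) := by
  have hcont : Continuous f := hdiff.continuous
  intro u hu v hv huv
  simp only [hg]
  rcases eq_or_lt_of_le huv with rfl | huv'
  · exact le_rfl
  have hv0 : 0 < v := lt_of_le_of_lt hu.1 huv'
  have hu0 : 0 ≤ u := hu.1
  have hvb : v ≤ b := hv.2
  set s : ℝ := (v - u) / 2 with hs
  have hs0 : 0 ≤ s := by rw [hs]; linarith
  -- pointwise inequality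
  have hpt : ∀ x : ℝ, f (x + s) * f (x + s - v) ≤ f x * f (x - u) := by
    intro x
    set p : ℝ := (u + v) / (2 * v) with hp
    set q : ℝ := (v - u) / (2 * v) with hq
    have hp0 : 0 ≤ p := by positivity
    have hq0 : 0 ≤ q := by rw [hq]; apply div_nonneg <;> linarith
    have hvne : v ≠ 0 := ne_of_gt hv0
    have hpq : p + q = 1 := by rw [hp, hq]; field_simp; ring
    have h1 : f (x + s - v) ^ p * f (x + s) ^ q ≤ f (x - u) := by
      have := hlc (x + s - v) (x + s) p q hp0 hq0 hpq
      have heq : p * (x + s - v) + q * (x + s) = x - u := by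
        rw [hp, hq, hs, div_mul_eq_mul_div, div_mul_eq_mul_div, ← add_div,
          div_eq_iff (by positivity)]; ring
      rwa [heq] at this
    have h2 : f (x + s - v) ^ q * f (x + s) ^ p ≤ f x := by
      have := hlc (x + s - v) (x + s) q p hq0 hp0 (by linarith)
      have heq : q * (x + s - v) + p * (x + s) = x := by
        rw [hp, hq, hs, div_mul_eq_mul_div, div_mul_eq_mul_div, ← add_div,
          div_eq_iff (by positivity)]; ring
      rwa [heq] at this
    have hprod : (f (x + s - v) ^ p * f (x + s) ^ q) * (f (x + s - v) ^ q * f (x + s) ^ p)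
        = f (x + s) * f (x + s - v) := by
      rw [mul_mul_mul_comm, ← Real.rpow_add' (hf0 _) (by rw [hpq]; norm_num),
        ← Real.rpow_add' (hf0 _) (by rw [add_comm, hpq]; norm_num), hpq, add_comm q p, hpq,
        Real.rpow_one, Real.rpow_one, mul_comm]
    calc f (x + s) * f (x + s - v)
        = (f (x + s - v) ^ p * f (x + s) ^ q) * (f (x + s - v) ^ q * f (x + s) ^ p) :=
          hprod.symm
      _ ≤ f (x - u) * f x :=
          mul_le_mul h1 h2 (mul_nonneg (Real.rpow_nonneg (hf0 _) _) (Real.rpow_nonneg (hf0 _) _)) (hf0 _)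
      _ = f x * f (x - u) := mul_comm _ _
  -- integral steps
  have hshift : (∫ x in v..b, f x * f (x - v))
      = ∫ x in (v - s)..(b - s), f (x + s) * f (x + s - v) := by
    have := intervalIntegral.integral_comp_add_right (a := v - s) (b := b - s)
      (fun y => f y * f (y - v)) s
    simpa using this.symm
  have hcont1 : Continuous fun x => f (x + s) * f (x + s - v) := by fun_prop
  have hcont2 : Continuous fun x => f x * f (x - u) := by fun_prop
  have hle1 : v - s ≤ b - s := by linarith
  have hmono : (∫ x in (v - s)..(b - s), f (x + s) * f (x + s - v))
      ≤ ∫ x in (v - s)..(b - s), f x * f (x - u) :=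
    intervalIntegral.integral_mono_on hle1
      (hcont1.intervalIntegrable _ _) (hcont2.intervalIntegrable _ _)
      (fun x _ => hpt x)
  have hincl : (∫ x in (v - s)..(b - s), f x * f (x - u))
      ≤ ∫ x in u..b, f x * f (x - u) := by
    apply intervalIntegral.integral_mono_interval (by simp [hs]; linarith) hle1
      (by linarith)
    · filter_upwards with x using mul_nonneg (hf0 _) (hf0 _)
    · exact hcont2.intervalIntegrable _ _
  have hnum : (∫ x in v..b, f x * f (x - v)) ≤ ∫ x in u..b, f x * f (x - u) :=
    hshift ▸ (hmono.trans hincl)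
  exact div_le_div_of_nonneg_right hnum (by positivity) |>.trans_eq rfl
end

section
/- Let X₁ and X₂ be independent random variables each with a log-concave, differentiable density f, and for b > 0 with F(b) = P(0 < X < b) > 0 let g(u; b) = ∫ᵤᵇ f(x) f(x − u) dx / F(b)². Then g(u; b) is totally positive of order 2 in (u, b): for every u₁ < u₂ and b₁ < b₂ (with all arguments in the domain), g(u₁; b₁)·g(u₂; b₂) ≥ g(u₁; b₂)·g(u₂; b₁). -/
open MeasureTheory Set

/-- Let `X₁, X₂` be i.i.d. with log-concave differentiable density
`f`, `F x = P(0 < X < x)`, and `g u b = (∫ x in u..b, f x * f (x - u)) / F(b)²`.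
Then `g` is totally positive of order 2 in `(u, b)`: for `0 ≤ u₁ < u₂ ≤ b₁ < b₂`
with `F b₁ > 0`, `g u₁ b₁ * g u₂ b₂ ≥ g u₁ b₂ * g u₂ b₁`. -/
theorem conditional_difference_density_TP2
    (f : ℝ → ℝ) (hf0 : ∀ x, 0 ≤ f x) (hfint : ∫ x, f x = 1)
    (hlc : ∀ x y p q : ℝ, 0 ≤ p → 0 ≤ q → p + q = 1 →
      f x ^ p * f y ^ q ≤ f (p * x + q * y))
    (hdiff : Differentiable ℝ f)
    (F : ℝ → ℝ) (hF : ∀ x, F x = ∫ t in Ioo 0 x, f t)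
    (g : ℝ → ℝ → ℝ)
    (hg : ∀ u b, g u b = (∫ x in u..b, f x * f (x - u)) / (F b) ^ 2)
    (u₁ u₂ b₁ b₂ : ℝ) (hu₁ : 0 ≤ u₁) (hu : u₁ < u₂) (hub : u₂ ≤ b₁)
    (hb : b₁ < b₂) (hFb₁ : 0 < F b₁) :
    g u₁ b₂ * g u₂ b₁ ≤ g u₁ b₁ * g u₂ b₂ := by
  have hc : Continuous f := hdiff.continuous
  have hcc : ∀ u : ℝ, Continuous (fun x => f x * f (x - u)) := fun u =>
    hc.mul (hc.comp (continuous_id.sub continuous_const))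
  have hcI : ∀ u a b : ℝ, IntervalIntegrable (fun x => f x * f (x - u)) volume a b :=
    fun u a b => (hcc u).intervalIntegrable a b
  -- integrability of f
  have hfi : Integrable f := by
    by_contra h
    rw [integral_undef h] at hfint
    norm_num at hfint
  -- F b₂ > 0
  have hFb₂ : 0 < F b₂ := by
    have hmono : F b₁ ≤ F b₂ := by
      rw [hF, hF]
      refine setIntegral_mono_set hfi.integrableOn ?_ ?_
      · exact Filter.Eventually.of_forall fun x => hf0 x
      · exact Filter.Eventually.of_forall (fun x hx => ⟨hx.1, hx.2.trans hb⟩)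
    linarith
  -- key pointwise TP2 inequality from log-concavity
  have key : ∀ s t : ℝ, s ≤ t → f (s - u₂) * f (t - u₁) ≤ f (s - u₁) * f (t - u₂) := by
    intro s t hst
    have hΔpos : 0 < (t - s) + (u₂ - u₁) := by linarith
    set Δ := (t - s) + (u₂ - u₁) with hΔdef
    set p := (t - s) / Δ with hpdef
    set q := (u₂ - u₁) / Δ with hqdef
    have hp : 0 ≤ p := div_nonneg (by linarith) hΔpos.le
    have hq : 0 ≤ q := div_nonneg (by linarith) hΔpos.le
    have hpq : p + q = 1 := by
      rw [hpdef, hqdef, ← add_div, hΔdef]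
      exact div_self hΔpos.ne'
    have e1 : p * (s - u₂) + q * (t - u₁) = s - u₁ := by
      rw [hpdef, hqdef]
      field_simp
      ring
    have e2 : q * (s - u₂) + p * (t - u₁) = t - u₂ := by
      rw [hpdef, hqdef]
      field_simp
      ring
    have h1 := hlc (s - u₂) (t - u₁) p q hp hq hpq
    have h2 := hlc (s - u₂) (t - u₁) q p hq hp (by linarith)
    rw [e1] at h1
    rw [e2] at h2
    have hmul : (f (s - u₂) ^ p * f (t - u₁) ^ q) * (f (s - u₂) ^ q * f (t - u₁) ^ p)
        ≤ f (s - u₁) * f (t - u₂) :=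
      mul_le_mul h1 h2 (mul_nonneg (Real.rpow_nonneg (hf0 _) _) (Real.rpow_nonneg (hf0 _) _)) (hf0 _)
    have hrw : (f (s - u₂) ^ p * f (t - u₁) ^ q) * (f (s - u₂) ^ q * f (t - u₁) ^ p)
        = f (s - u₂) * f (t - u₁) := by
      have ha := hf0 (s - u₂)
      have hb' := hf0 (t - u₁)
      have h1' : f (s - u₂) ^ p * f (s - u₂) ^ q = f (s - u₂) := by
        rw [← Real.rpow_add' ha (by rw [hpq]; norm_num), hpq, Real.rpow_one]
      have h2' : f (t - u₁) ^ q * f (t - u₁) ^ p = f (t - u₁) := by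
        rw [← Real.rpow_add' hb' (by rw [add_comm, hpq]; norm_num), add_comm, hpq,
          Real.rpow_one]
      calc (f (s - u₂) ^ p * f (t - u₁) ^ q) * (f (s - u₂) ^ q * f (t - u₁) ^ p)
          = (f (s - u₂) ^ p * f (s - u₂) ^ q) * (f (t - u₁) ^ q * f (t - u₁) ^ p) := by ring
        _ = f (s - u₂) * f (t - u₁) := by rw [h1', h2']
    linarith [hrw ▸ hmul]
  -- abbreviations
  set A₁ := ∫ x in u₁..b₁, f x * f (x - u₁) with hA₁
  set A₂ := ∫ x in u₂..b₁, f x * f (x - u₂) with hA₂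
  set B₁ := ∫ x in u₂..b₁, f x * f (x - u₁) with hB₁
  set E₁ := ∫ y in b₁..b₂, f y * f (y - u₁) with hE₁
  set E₂ := ∫ y in b₁..b₂, f y * f (y - u₂) with hE₂
  have split₁ : (∫ x in u₁..b₂, f x * f (x - u₁)) = A₁ + E₁ :=
    (intervalIntegral.integral_add_adjacent_intervals (hcI u₁ u₁ b₁) (hcI u₁ b₁ b₂)).symm
  have split₂ : (∫ x in u₂..b₂, f x * f (x - u₂)) = A₂ + E₂ :=
    (intervalIntegral.integral_add_adjacent_intervals (hcI u₂ u₂ b₁) (hcI u₂ b₁ b₂)).symm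
  -- nonnegativity facts
  have hE₂0 : 0 ≤ E₂ := intervalIntegral.integral_nonneg hb.le
    (fun x _ => mul_nonneg (hf0 x) (hf0 _))
  have hA₂0 : 0 ≤ A₂ := intervalIntegral.integral_nonneg hub
    (fun x _ => mul_nonneg (hf0 x) (hf0 _))
  have hB₁A₁ : B₁ ≤ A₁ := by
    have hsplit : A₁ = (∫ x in u₁..u₂, f x * f (x - u₁)) + B₁ :=
      (intervalIntegral.integral_add_adjacent_intervals (hcI u₁ u₁ u₂) (hcI u₁ u₂ b₁)).symm
    have h0 : 0 ≤ ∫ x in u₁..u₂, f x * f (x - u₁) :=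
      intervalIntegral.integral_nonneg hu.le (fun x _ => mul_nonneg (hf0 x) (hf0 _))
    linarith
  have hA₁0 : 0 ≤ A₁ := intervalIntegral.integral_nonneg (hu.le.trans hub)
    (fun x _ => mul_nonneg (hf0 x) (hf0 _))
  -- the central step : A₂ * E₁ ≤ B₁ * E₂
  have step : A₂ * E₁ ≤ B₁ * E₂ := by
    rw [hA₂, hB₁, ← intervalIntegral.integral_mul_const, ← intervalIntegral.integral_mul_const]
    refine intervalIntegral.integral_mono_on hub
      (((hcc u₂).mul continuous_const).intervalIntegrable _ _)
      (((hcc u₁).mul continuous_const).intervalIntegrable _ _) ?_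
    intro x hx
    rw [hE₁, hE₂, ← intervalIntegral.integral_const_mul, ← intervalIntegral.integral_const_mul]
    refine intervalIntegral.integral_mono_on hb.le
      ((continuous_const.mul (hcc u₁)).intervalIntegrable _ _)
      ((continuous_const.mul (hcc u₂)).intervalIntegrable _ _) ?_
    intro y hy
    have hxy : x ≤ y := hx.2.trans hy.1
    have h := mul_le_mul_of_nonneg_left (key x y hxy) (mul_nonneg (hf0 x) (hf0 y))
    nlinarith [h]
  -- core numerator inequality
  have core : (A₁ + E₁) * A₂ ≤ A₁ * (A₂ + E₂) := by
    have h1 : E₁ * A₂ ≤ B₁ * E₂ := by linarith [step]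
    have h2 : B₁ * E₂ ≤ A₁ * E₂ := mul_le_mul_of_nonneg_right hB₁A₁ hE₂0
    nlinarith
  -- conclude
  rw [hg, hg, hg, hg, split₁, split₂]
  rw [div_mul_div_comm, div_mul_div_comm, div_le_div_iff₀ (by positivity) (by positivity)]
  nlinarith [mul_le_mul_of_nonneg_right core
    (le_of_lt (mul_pos (pow_pos hFb₁ 2) (pow_pos hFb₂ 2)))]
end

section
/- Let X₁ and X₂ be independent random variables each with a log-concave, differentiable density f, and let U = X₁ − X₂. Then for every function φ(u) that is increasing in |u|, the conditional expectation E(φ(U) | 0 < X₁, X₂ < b) (when defined) is an increasing function of b > 0; more generally, E(φ(U) | X₁, X₂ ∈ A) ≤ E(φ(U) | X₁, X₂ ∈ B) for intervals A ⊂ B. In particular, taking φ(u) = u²/2 gives that Var(X | X ∈ A) is partially monotonic, and taking φ(u) = |u| gives that E(|X₁ − X₂| | X₁, X₂ ∈ A) is partially monotonic. -/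
open MeasureTheory ProbabilityTheory Set
open scoped ENNReal

namespace Stmt18

variable {f : ℝ → ℝ}

lemma lc_pair (hf0 : ∀ x, 0 ≤ f x)
    (hlc : ∀ x y p q : ℝ, 0 ≤ p → 0 ≤ q → p + q = 1 → f x ^ p * f y ^ q ≤ f (p * x + q * y))
    {x y t : ℝ} (ht : 0 ≤ t) (hxy : y + t ≤ x) :
    f x * f y ≤ f (y + t) * f (x - t) := by
  rcases eq_or_lt_of_le (show y ≤ x by linarith) with h | h
  · have ht0 : t = 0 := by linarith [hxy, h]
    subst ht0; subst h; simp
  · set p := t / (x - y) with hp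
    have hxy' : 0 < x - y := by linarith
    have hp0 : 0 ≤ p := div_nonneg ht hxy'.le
    have hp1 : p ≤ 1 := by
      rw [hp, div_le_one hxy']; linarith
    have hq0 : 0 ≤ 1 - p := by linarith
    have hpt : p * (x - y) = t := div_mul_cancel₀ t hxy'.ne'
    have h1 := hlc x y p (1 - p) hp0 hq0 (by ring)
    have h2 := hlc x y (1 - p) p hq0 hp0 (by ring)
    have e1 : p * x + (1 - p) * y = y + t := by nlinarith [hpt]
    have e2 : (1 - p) * x + p * y = x - t := by nlinarith [hpt]
    rw [e1] at h1; rw [e2] at h2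
    have hm : (f x ^ p * f y ^ (1 - p)) * (f x ^ (1 - p) * f y ^ p) ≤ f (y + t) * f (x - t) :=
      mul_le_mul h1 h2 (mul_nonneg (Real.rpow_nonneg (hf0 x) _) (Real.rpow_nonneg (hf0 y) _))
        (hf0 _)
    calc f x * f y = (f x ^ p * f x ^ (1 - p)) * (f y ^ (1 - p) * f y ^ p) := by
          rw [← Real.rpow_add' (hf0 x) (by norm_num), ← Real.rpow_add' (hf0 y) (by norm_num)]
          norm_num
      _ = (f x ^ p * f y ^ (1 - p)) * (f x ^ (1 - p) * f y ^ p) := by ring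
      _ ≤ f (y + t) * f (x - t) := hm

/-- The product measure written as a `withDensity` over `volume.prod volume`. -/
lemma prod_withDensity (hcont : Continuous f)
    (μ : Measure ℝ) [IsProbabilityMeasure μ]
    (hμ : μ = volume.withDensity (fun x => ENNReal.ofReal (f x))) :
    μ.prod μ = (volume.prod volume).withDensity
      (fun p => ENNReal.ofReal (f p.1) * ENNReal.ofReal (f p.2)) := by
  have hm : Measurable fun x => ENNReal.ofReal (f x) :=
    (measurable_coe_nnreal_ennreal.comp (hcont.measurable.real_toNNReal))
  refine Measure.prod_eq (fun s t hs ht => ?_)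
  rw [withDensity_apply _ (hs.prod ht), ← Measure.prod_restrict,
    lintegral_prod_mul hm.aemeasurable hm.aemeasurable,
    hμ, withDensity_apply _ hs, withDensity_apply _ ht]

lemma far_measurable {I : Set ℝ} (hIm : MeasurableSet I) (t : ℝ) :
    MeasurableSet ((I ×ˢ I) ∩ {p : ℝ × ℝ | p.2 + t < p.1}) :=
  (hIm.prod hIm).inter <| measurableSet_lt (measurable_snd.add_const t) measurable_fst

/-- Key reflection estimate (right version). -/
lemma refl_bound (hf0 : ∀ x, 0 ≤ f x)
    (hlc : ∀ x y p q : ℝ, 0 ≤ p → 0 ≤ q → p + q = 1 → f x ^ p * f y ^ q ≤ f (p * x + q * y))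
    (hcont : Continuous f)
    (μ : Measure ℝ) [IsProbabilityMeasure μ]
    (hμ : μ = volume.withDensity (fun x => ENNReal.ofReal (f x)))
    {I : Set ℝ} (hI : I.OrdConnected) {b t : ℝ} (ht : 0 < t) (hIb : I ⊆ Iic b) :
    2 * (μ.prod μ) ((I ×ˢ I) ∩ {p : ℝ × ℝ | p.2 + t < p.1})
      ≤ μ I * μ (I ∩ Iic (b - t)) := by
  classical
  have hIm : MeasurableSet I := hI.measurableSet
  set w : ℝ × ℝ → ℝ≥0∞ := fun p => ENNReal.ofReal (f p.1) * ENNReal.ofReal (f p.2) with hw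
  have hwm : Measurable w := by
    have hm : Measurable fun x : ℝ => ENNReal.ofReal (f x) :=
      (measurable_coe_nnreal_ennreal.comp (hcont.measurable.real_toNNReal))
    exact (hm.comp measurable_fst).mul (hm.comp measurable_snd)
  set Far : Set (ℝ × ℝ) := (I ×ˢ I) ∩ {p : ℝ × ℝ | p.2 + t < p.1} with hFar
  have hFarm : MeasurableSet Far := far_measurable hIm t
  set S : Set (ℝ × ℝ) := I ×ˢ (I ∩ Iic (b - t)) with hS
  have hSm : MeasurableSet S := hIm.prod (hIm.inter measurableSet_Iic)
  set T : Set (ℝ × ℝ) := S \ {p : ℝ × ℝ | p.2 + t < p.1} with hT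
  have hTm : MeasurableSet T :=
    hSm.diff (measurableSet_lt (measurable_snd.add_const t) measurable_fst)
  have hFarS : Far ⊆ S := by
    rintro ⟨x, y⟩ ⟨⟨hx, hy⟩, hlt⟩
    simp only [mem_setOf_eq] at hlt
    have hxb := hIb hx
    simp only [mem_Iic] at hxb
    exact ⟨hx, hy, by simp only [mem_Iic]; linarith⟩
  -- the reflection map
  set Φ : ℝ × ℝ → ℝ × ℝ := fun p => (p.2 + t, p.1 - t) with hΦ
  have hΦmp : MeasurePreserving Φ (volume.prod volume) (volume.prod volume) := by
    have h1 : MeasurePreserving (fun x : ℝ => x + t) volume volume :=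
      measurePreserving_add_right volume t
    have h2 : MeasurePreserving (fun x : ℝ => x - t) volume volume := by
      simpa [sub_eq_add_neg] using measurePreserving_add_right volume (-t)
    exact (h1.prod h2).comp Measure.measurePreserving_swap
  have hFarT : Far ⊆ Φ ⁻¹' T := by
    rintro ⟨x, y⟩ ⟨⟨hx, hy⟩, hlt⟩
    simp only [mem_setOf_eq] at hlt
    have hyx : y ≤ x := by linarith
    have h1 : y + t ∈ I := hI.out hy hx ⟨by linarith, by linarith⟩
    have h2 : x - t ∈ I := hI.out hy hx ⟨by linarith, by linarith⟩
    have hxb : x ≤ b := hIb hx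
    refine ⟨⟨h1, h2, ?_⟩, ?_⟩
    · simp only [mem_Iic]; linarith
    · simp only [mem_setOf_eq, not_lt]; linarith
  -- measure computation
  have hprod := prod_withDensity hcont μ hμ
  have hkey : (μ.prod μ) Far ≤ (μ.prod μ) T := by
    rw [hprod, withDensity_apply _ hFarm, withDensity_apply _ hTm]
    calc ∫⁻ p in Far, w p ∂(volume.prod volume)
        ≤ ∫⁻ p in Far, w (Φ p) ∂(volume.prod volume) := by
          refine setLIntegral_mono (hwm.comp hΦmp.measurable) (fun p hp => ?_)
          obtain ⟨⟨hx, hy⟩, hlt⟩ := hp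
          simp only [mem_setOf_eq] at hlt
          have := lc_pair hf0 hlc ht.le (le_of_lt hlt : p.2 + t ≤ p.1)
          simp only [hw, hΦ]
          rw [← ENNReal.ofReal_mul (hf0 _), ← ENNReal.ofReal_mul (hf0 _)]
          exact ENNReal.ofReal_le_ofReal this
      _ ≤ ∫⁻ p in Φ ⁻¹' T, w (Φ p) ∂(volume.prod volume) := lintegral_mono_set hFarT
      _ = ∫⁻ p in T, w p ∂(volume.prod volume) :=
          hΦmp.setLIntegral_comp_preimage hTm hwm
  have hsplit : (μ.prod μ) Far + (μ.prod μ) T = (μ.prod μ) S := by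
    have h1 : S ∩ {p : ℝ × ℝ | p.2 + t < p.1} = Far := by
      apply Subset.antisymm
      · rintro ⟨x, y⟩ ⟨⟨hx, hy⟩, hlt⟩; exact ⟨⟨hx, hy.1⟩, hlt⟩
      · exact fun p hp => ⟨hFarS hp, hp.2⟩
    calc (μ.prod μ) Far + (μ.prod μ) T
        = (μ.prod μ) (S ∩ {p : ℝ × ℝ | p.2 + t < p.1}) + (μ.prod μ) (S \ {p : ℝ × ℝ | p.2 + t < p.1}) := by rw [h1]
      _ = (μ.prod μ) S :=
          measure_inter_add_diff S (measurableSet_lt (measurable_snd.add_const t) measurable_fst)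
  calc 2 * (μ.prod μ) Far = (μ.prod μ) Far + (μ.prod μ) Far := two_mul _
    _ ≤ (μ.prod μ) Far + (μ.prod μ) T := add_le_add le_rfl hkey
    _ = (μ.prod μ) S := hsplit
    _ = μ I * μ (I ∩ Iic (b - t)) := Measure.prod_prod _ _



variable {f : ℝ → ℝ}

-- integrability of the density
lemma f_integrable (hf0 : ∀ x, 0 ≤ f x) (hcont : Continuous f)
    (μ : Measure ℝ) [IsProbabilityMeasure μ]
    (hμ : μ = volume.withDensity (fun x => ENNReal.ofReal (f x))) :
    Integrable f volume := by
  refine ⟨hcont.aestronglyMeasurable, ?_⟩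
  rw [HasFiniteIntegral]
  have h1 : ∀ x, (‖f x‖₊ : ℝ≥0∞) = ENNReal.ofReal (f x) := fun x => Real.enorm_eq_ofReal (hf0 x)
  calc ∫⁻ x, (‖f x‖₊ : ℝ≥0∞) ∂volume = ∫⁻ x, ENNReal.ofReal (f x) ∂volume := by
        simp_rw [h1]
    _ = μ univ := by rw [hμ, withDensity_apply _ MeasurableSet.univ, Measure.restrict_univ]
    _ = 1 := measure_univ
    _ < ∞ := by norm_num

lemma mu_atom (μ : Measure ℝ)
    (hμ : μ = volume.withDensity (fun x => ENNReal.ofReal (f x))) (a : ℝ) : μ {a} = 0 := by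
  rw [hμ]
  exact withDensity_absolutelyContinuous volume _ (measure_singleton a)

-- the set-measure bridge
lemma mu_set_eq (hf0 : ∀ x, 0 ≤ f x) (hcont : Continuous f)
    (μ : Measure ℝ) [IsProbabilityMeasure μ]
    (hμ : μ = volume.withDensity (fun x => ENNReal.ofReal (f x)))
    {K : Set ℝ} (hK : MeasurableSet K) {S : Set ℝ} (hS : MeasurableSet S) :
    μ (K ∩ S) = ENNReal.ofReal (∫ s in S, K.indicator f s ∂volume) := by
  have hInt : Integrable (K.indicator f) volume :=
    (f_integrable hf0 hcont μ hμ).indicator hK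
  rw [ofReal_integral_eq_lintegral_ofReal (hInt.restrict)
    (Filter.Eventually.of_forall fun x => indicator_nonneg (fun y _ => hf0 y) x)]
  rw [hμ, withDensity_apply _ (hK.inter hS)]
  have hind : ∀ s, ENNReal.ofReal (K.indicator f s)
      = K.indicator (fun x => ENNReal.ofReal (f x)) s := by
    intro s; by_cases h : s ∈ K <;> simp [h]
  simp_rw [hind]
  rw [lintegral_indicator hK, Measure.restrict_restrict hK]


/-- Ratio monotonicity when growing the interval to the right. -/
lemma grow_right (hf0 : ∀ x, 0 ≤ f x)
    (hlc : ∀ x y p q : ℝ, 0 ≤ p → 0 ≤ q → p + q = 1 → f x ^ p * f y ^ q ≤ f (p * x + q * y))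
    (hcont : Continuous f)
    (μ : Measure ℝ) [IsProbabilityMeasure μ]
    (hμ : μ = volume.withDensity (fun x => ENNReal.ofReal (f x)))
    {K K' : Set ℝ} (hK : K.OrdConnected) (hK' : K'.OrdConnected)
    (hKK' : K ⊆ K') (hup : ∀ z ∈ K' \ K, ∀ w ∈ K, w ≤ z)
    (hKpos : 0 < μ K) {t : ℝ} (ht : 0 < t) :
    (μ.prod μ) ((K ×ˢ K) ∩ {p : ℝ × ℝ | p.2 + t < p.1}) * (μ K' * μ K')
      ≤ (μ.prod μ) ((K' ×ˢ K') ∩ {p : ℝ × ℝ | p.2 + t < p.1}) * (μ K * μ K) := by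
  classical
  by_cases hBdd : BddAbove K
  swap
  · -- K unbounded above forces K' = K
    have hKeq : K' = K := by
      apply Subset.antisymm _ hKK'
      intro z hz
      by_contra hzK
      exact hBdd ⟨z, fun w hw => hup z ⟨hz, hzK⟩ w hw⟩
    rw [hKeq]
  have hKm : MeasurableSet K := hK.measurableSet
  have hK'm : MeasurableSet K' := hK'.measurableSet
  have hKne : K.Nonempty := nonempty_of_measure_ne_zero hKpos.ne'
  set c := sSup K with hc
  have hKc : K ⊆ Iic c := fun w hw => le_csSup hBdd hw
  have hk0 : ∃ k₀ ∈ K, k₀ < c := by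
    by_contra hcon
    push_neg at hcon
    have hsingle : K ⊆ {c} := fun z hz => le_antisymm (hKc hz) (hcon z hz)
    have : μ K = 0 := measure_mono_null hsingle (mu_atom μ hμ c)
    exact absurd this hKpos.ne'
  have hfInt : Integrable f volume := f_integrable hf0 hcont μ hμ
  set g : ℝ → ℝ := K'.indicator f with hg
  have hgInt : Integrable g volume := hfInt.indicator hK'm
  have hg0 : ∀ x, 0 ≤ g x := fun x => indicator_nonneg (fun y _ => hf0 y) x
  have hgm : Measurable g := hcont.measurable.indicator hK'm
  set G : ℝ → ℝ := fun x => ∫ s in Iic x, g s ∂volume with hGdef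
  have hGx : ∀ x, μ (K' ∩ Iic x) = ENNReal.ofReal (G x) := fun x =>
    mu_set_eq hf0 hcont μ hμ hK'm measurableSet_Iic
  have hG0 : ∀ x, 0 ≤ G x := fun x =>
    setIntegral_nonneg measurableSet_Iic fun y _ => hg0 y
  have hGmono : Monotone G := fun a b hab =>
    setIntegral_mono_set hgInt.integrableOn
      (Filter.Eventually.of_forall fun y => hg0 y)
      (HasSubset.Subset.eventuallyLE (Iic_subset_Iic.mpr hab))
  set Mtot : ℝ := ∫ s, g s ∂volume with hMtot
  have hMtot0 : 0 ≤ Mtot := integral_nonneg hg0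
  have hGle : ∀ x, G x ≤ Mtot := fun x =>
    setIntegral_le_integral hgInt (Filter.Eventually.of_forall fun y => hg0 y)
  have hGK' : μ K' = ENNReal.ofReal Mtot := by
    have := mu_set_eq hf0 hcont μ hμ hK'm MeasurableSet.univ
    rwa [inter_univ, Measure.restrict_univ] at this
  have hGeq : ∀ x, G x = G c + ∫ s in c..x, g s ∂volume := by
    intro x
    have := intervalIntegral.integral_Iic_sub_Iic hgInt.integrableOn hgInt.integrableOn
      (a := c) (b := x)
    change G x - G c = _ at this
    linarith
  have hGcont : Continuous G := by
    have hfun : G = fun x => G c + ∫ s in c..x, g s ∂volume := funext hGeq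
    rw [hfun]
    exact continuous_const.add
      (intervalIntegral.continuous_primitive (fun a b => hgInt.intervalIntegrable) c)
  have hGtcont : Continuous fun s : ℝ => G (s - t) :=
    hGcont.comp (continuous_id.sub continuous_const)
  have hNQint : Integrable (fun s => g s * G (s - t)) volume := by
    refine Integrable.mono (hgInt.const_mul Mtot)
      ((hgm.mul (hGtcont.measurable)).aestronglyMeasurable)
      (Filter.Eventually.of_forall fun s => ?_)
    rw [Real.norm_eq_abs, Real.norm_eq_abs,
      abs_of_nonneg (mul_nonneg (hg0 s) (hG0 _)),
      abs_of_nonneg (mul_nonneg hMtot0 (hg0 s))]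
    calc g s * G (s - t) ≤ g s * Mtot := by
          exact mul_le_mul_of_nonneg_left (hGle _) (hg0 s)
      _ = Mtot * g s := mul_comm _ _
  set NQ : ℝ → ℝ := fun x => ∫ s in Iic x, g s * G (s - t) ∂volume with hNQdef
  have hNQ0 : ∀ x, 0 ≤ NQ x := fun x =>
    setIntegral_nonneg measurableSet_Iic fun y _ => mul_nonneg (hg0 y) (hG0 _)
  have hNQeq : ∀ x, NQ x = NQ c + ∫ s in c..x, g s * G (s - t) ∂volume := by
    intro x
    have := intervalIntegral.integral_Iic_sub_Iic hNQint.integrableOn hNQint.integrableOn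
      (a := c) (b := x)
    change NQ x - NQ c = _ at this
    linarith
  have hNQcont : Continuous NQ := by
    have hfun : NQ = fun x => NQ c + ∫ s in c..x, g s * G (s - t) ∂volume := funext hNQeq
    rw [hfun]
    exact continuous_const.add
      (intervalIntegral.continuous_primitive (fun a b => hNQint.intervalIntegrable) c)
  -- Fubini bridge
  have hNQx : ∀ b : ℝ, (μ.prod μ) (((K' ∩ Iic b) ×ˢ (K' ∩ Iic b)) ∩ {p : ℝ × ℝ | p.2 + t < p.1})
      = ENNReal.ofReal (NQ b) := by
    intro b
    set Kb := K' ∩ Iic b with hKb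
    have hKbm : MeasurableSet Kb := hK'm.inter measurableSet_Iic
    rw [Measure.prod_apply (far_measurable hKbm t)]
    have hIioIic : ∀ u : ℝ, μ (K' ∩ Iio u) = ENNReal.ofReal (G u) := by
      intro u
      rw [← hGx u]
      apply le_antisymm (measure_mono (inter_subset_inter_right _ Iio_subset_Iic_self))
      calc μ (K' ∩ Iic u) ≤ μ (K' ∩ Iio u ∪ {u}) := by
            apply measure_mono
            rintro z ⟨hz1, hz2⟩
            rcases lt_or_eq_of_le (show z ≤ u from hz2) with h | h
            · exact Or.inl ⟨hz1, h⟩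
            · exact Or.inr (by simp [h])
        _ ≤ μ (K' ∩ Iio u) + μ {u} := measure_union_le _ _
        _ = μ (K' ∩ Iio u) := by rw [mu_atom μ hμ, add_zero]
    have hslice : ∀ x : ℝ,
        μ (Prod.mk x ⁻¹' ((Kb ×ˢ Kb) ∩ {p : ℝ × ℝ | p.2 + t < p.1}))
          = Kb.indicator (fun x => ENNReal.ofReal (G (x - t))) x := by
      intro x
      by_cases hx : x ∈ Kb
      · have hxb : x ≤ b := hx.2
        have hpre : Prod.mk x ⁻¹' ((Kb ×ˢ Kb) ∩ {p : ℝ × ℝ | p.2 + t < p.1})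
            = K' ∩ Iio (x - t) := by
          ext y
          simp only [mem_preimage, mem_inter_iff, mem_prod, mem_setOf_eq, mem_Iio, hKb,
            mem_Iic]
          constructor
          · rintro ⟨⟨-, hy⟩, hlt⟩
            exact ⟨hy.1, by linarith⟩
          · rintro ⟨hy, hlt⟩
            exact ⟨⟨⟨hx.1, hxb⟩, hy, by linarith⟩, by linarith⟩
        rw [hpre, indicator_of_mem hx, hIioIic]
      · rw [indicator_of_notMem hx]
        have hpre : Prod.mk x ⁻¹' ((Kb ×ˢ Kb) ∩ {p : ℝ × ℝ | p.2 + t < p.1}) = ∅ := by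
          ext y
          simp only [mem_preimage, mem_inter_iff, mem_prod, mem_setOf_eq, mem_empty_iff_false,
            iff_false, not_and]
          intro h
          exact absurd h.1 hx
        rw [hpre, measure_empty]
    calc ∫⁻ x, μ (Prod.mk x ⁻¹' ((Kb ×ˢ Kb) ∩ {p : ℝ × ℝ | p.2 + t < p.1})) ∂μ
        = ∫⁻ x, Kb.indicator (fun x => ENNReal.ofReal (G (x - t))) x ∂μ := by
          exact lintegral_congr hslice
      _ = ∫⁻ x in Kb, ENNReal.ofReal (G (x - t)) ∂μ := lintegral_indicator hKbm _
      _ = ∫⁻ x in Kb, ENNReal.ofReal (f x) * ENNReal.ofReal (G (x - t)) ∂volume := by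
          rw [hμ, restrict_withDensity hKbm,
            lintegral_withDensity_eq_lintegral_mul _
              hcont.measurable.ennreal_ofReal hGtcont.measurable.ennreal_ofReal]
          simp [Pi.mul_apply]
      _ = ∫⁻ x in Kb, ENNReal.ofReal (f x * G (x - t)) ∂volume := by
          congr 1
          ext x
          rw [ENNReal.ofReal_mul (hf0 x)]
      _ = ENNReal.ofReal (∫ x in Kb, f x * G (x - t) ∂volume) := by
          rw [ofReal_integral_eq_lintegral_ofReal]
          · refine Integrable.mono ((hfInt.const_mul Mtot).restrict)
              ((hcont.measurable.mul hGtcont.measurable).aestronglyMeasurable)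
              (Filter.Eventually.of_forall fun s => ?_)
            rw [Real.norm_eq_abs, Real.norm_eq_abs,
              abs_of_nonneg (mul_nonneg (hf0 s) (hG0 _)),
              abs_of_nonneg (mul_nonneg hMtot0 (hf0 s))]
            calc f s * G (s - t) ≤ f s * Mtot :=
                  mul_le_mul_of_nonneg_left (hGle _) (hf0 s)
              _ = Mtot * f s := mul_comm _ _
          · exact Filter.Eventually.of_forall fun s => mul_nonneg (hf0 s) (hG0 _)
      _ = ENNReal.ofReal (NQ b) := by
          congr 1
          have hind : ∀ x, K'.indicator (fun x => f x * G (x - t)) x = g x * G (x - t) := by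
            intro x
            by_cases hx : x ∈ K' <;> simp [hg, indicator_of_mem, indicator_of_notMem, hx]
          rw [hKb, ← Measure.restrict_restrict hK'm, ← integral_indicator hK'm]
          simp only [hNQdef]
          congr 1
          ext x
          exact hind x
  -- reflection key in real form
  have reflKey : ∀ u : ℝ, 2 * NQ u ≤ G (u - t) * G u := by
    intro u
    have h := refl_bound hf0 hlc hcont μ hμ
      (I := K' ∩ Iic u) (hK'.inter Set.ordConnected_Iic) ht inter_subset_right
    have h2 : (K' ∩ Iic u) ∩ Iic (u - t) = K' ∩ Iic (u - t) := by
      rw [inter_assoc, Iic_inter_Iic, min_eq_right (by linarith)]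
    rw [hNQx u, h2, hGx, hGx] at h
    have h3 : (2 : ℝ≥0∞) * ENNReal.ofReal (NQ u) = ENNReal.ofReal (2 * NQ u) := by
      rw [ENNReal.ofReal_mul (by norm_num : (0:ℝ) ≤ 2)]
      norm_num
    rw [h3, ← ENNReal.ofReal_mul (hG0 _)] at h
    have := (ENNReal.ofReal_le_ofReal_iff (mul_nonneg (hG0 _) (hG0 _))).mp h
    linarith [this, mul_comm (G u) (G (u - t))]
  -- positivity of G c
  have hGc : 0 < G c := by
    have h1 : μ K ≤ μ (K' ∩ Iic c) := measure_mono (subset_inter hKK' hKc)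
    rw [hGx c] at h1
    exact ENNReal.ofReal_pos.mp (lt_of_lt_of_le hKpos h1)
  -- the real core inequality
  have hopen_imp : ∀ b : ℝ, c ≤ b → (∀ u ∈ Ioo c b, u ∈ K') →
      NQ c * G b ^ 2 ≤ NQ b * G c ^ 2 := by
    intro b hcb hsub
    set ρ : ℝ → ℝ := fun x => NQ x / G x ^ 2 with hρ
    have hGpos : ∀ x ∈ Icc c b, 0 < G x := fun x hx => lt_of_lt_of_le hGc (hGmono hx.1)
    have hder : ∀ u ∈ Ioo c b, HasDerivAt ρ
        ((g u * G (u - t) * G u ^ 2 - NQ u * (↑2 * G u ^ (2 - 1) * g u)) / (G u ^ 2) ^ 2) u := by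
      intro u hu
      have hnhds : Ioo c b ∈ nhds u := isOpen_Ioo.mem_nhds hu
      have hgu : ContinuousAt g u := by
        refine hcont.continuousAt.congr ?_
        exact Filter.eventuallyEq_of_mem hnhds fun z hz => (indicator_of_mem (hsub z hz) f).symm
      have hGder : HasDerivAt G (g u) u := by
        have h1 : HasDerivAt (fun x => ∫ s in c..x, g s ∂volume) (g u) u :=
          intervalIntegral.integral_hasDerivAt_right hgInt.intervalIntegrable
            hgm.stronglyMeasurable.stronglyMeasurableAtFilter hgu
        have hfun : G = fun x => G c + ∫ s in c..x, g s ∂volume := funext hGeq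
        rw [hfun]
        exact h1.const_add (G c)
      have hNQder : HasDerivAt NQ (g u * G (u - t)) u := by
        have h1 : HasDerivAt (fun x => ∫ s in c..x, g s * G (s - t) ∂volume)
            (g u * G (u - t)) u :=
          intervalIntegral.integral_hasDerivAt_right hNQint.intervalIntegrable
            (hgm.mul hGtcont.measurable).stronglyMeasurable.stronglyMeasurableAtFilter
            (hgu.mul hGtcont.continuousAt)
        have hfun : NQ = fun x => NQ c + ∫ s in c..x, g s * G (s - t) ∂volume := funext hNQeq
        rw [hfun]
        exact h1.const_add (NQ c)
      exact hNQder.div (hGder.pow 2)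
        (pow_ne_zero 2 (hGpos u (Ioo_subset_Icc_self hu)).ne')
    have hmono : MonotoneOn ρ (Icc c b) := by
      apply monotoneOn_of_deriv_nonneg (convex_Icc c b)
      · exact ContinuousOn.div hNQcont.continuousOn (hGcont.pow 2).continuousOn
          fun x hx => pow_ne_zero 2 (hGpos x hx).ne'
      · rw [interior_Icc]
        exact fun u hu => ((hder u hu).differentiableAt).differentiableWithinAt
      · intro u hu
        rw [interior_Icc] at hu
        rw [(hder u hu).deriv]
        have hGu := hGpos u (Ioo_subset_Icc_self hu)
        apply div_nonneg _ (pow_nonneg (sq_nonneg _) 2)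
        have hnum : g u * G (u - t) * G u ^ 2 - NQ u * (↑2 * G u ^ (2 - 1) * g u)
            = g u * G u * (G (u - t) * G u - 2 * NQ u) := by
          norm_num
          ring
        rw [hnum]
        exact mul_nonneg (mul_nonneg (hg0 u) (hGu.le))
          (by linarith [reflKey u])
    have hcmem : c ∈ Icc c b := ⟨le_refl c, hcb⟩
    have hbmem : b ∈ Icc c b := ⟨hcb, le_refl b⟩
    have := hmono hcmem hbmem hcb
    rw [hρ] at this
    simp only at this
    rw [div_le_div_iff₀ (pow_pos (hGpos c hcmem) 2) (pow_pos (hGpos b hbmem) 2)] at this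
    exact this
  -- sandwiches at c
  have hKeq : μ K = ENNReal.ofReal (G c) := by
    rw [← hGx c]
    have hsand : K' ∩ Iic c ⊆ K ∪ {c} := by
      rintro z ⟨hz1, hz2⟩
      by_cases hzK : z ∈ K
      · exact Or.inl hzK
      · refine Or.inr ?_
        have hcz : c ≤ z := csSup_le hKne (hup z ⟨hz1, hzK⟩)
        simp [le_antisymm (hz2 : z ≤ c) hcz]
    refine le_antisymm (measure_mono (subset_inter hKK' hKc)) ?_
    calc μ (K' ∩ Iic c) ≤ μ (K ∪ {c}) := measure_mono hsand
      _ ≤ μ K + μ {c} := measure_union_le _ _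
      _ = μ K := by rw [mu_atom μ hμ, add_zero]
  have hFarKeq : (μ.prod μ) ((K ×ˢ K) ∩ {p : ℝ × ℝ | p.2 + t < p.1})
      = ENNReal.ofReal (NQ c) := by
    rw [← hNQx c]
    apply le_antisymm
    · exact measure_mono (inter_subset_inter
        (prod_mono (subset_inter hKK' hKc) (subset_inter hKK' hKc)) Subset.rfl)
    · have hsand : K' ∩ Iic c ⊆ K ∪ {c} := by
        rintro z ⟨hz1, hz2⟩
        by_cases hzK : z ∈ K
        · exact Or.inl hzK
        · refine Or.inr ?_
          have hcz : c ≤ z := csSup_le hKne (hup z ⟨hz1, hzK⟩)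
          simp [le_antisymm (hz2 : z ≤ c) hcz]
      have hsub2 : ((K' ∩ Iic c) ×ˢ (K' ∩ Iic c)) ∩ {p : ℝ × ℝ | p.2 + t < p.1}
          ⊆ ((K ×ˢ K) ∩ {p : ℝ × ℝ | p.2 + t < p.1}) ∪ (({c} : Set ℝ) ×ˢ (univ : Set ℝ)
            ∪ (univ : Set ℝ) ×ˢ ({c} : Set ℝ)) := by
        rintro ⟨x, y⟩ ⟨⟨hx, hy⟩, hlt⟩
        rcases hsand hx with hxK | hxc
        · rcases hsand hy with hyK | hyc
          · exact Or.inl ⟨⟨hxK, hyK⟩, hlt⟩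
          · exact Or.inr (Or.inr ⟨trivial, hyc⟩)
        · exact Or.inr (Or.inl ⟨hxc, trivial⟩)
      calc (μ.prod μ) (((K' ∩ Iic c) ×ˢ (K' ∩ Iic c)) ∩ {p : ℝ × ℝ | p.2 + t < p.1})
          ≤ (μ.prod μ) (((K ×ˢ K) ∩ {p : ℝ × ℝ | p.2 + t < p.1}) ∪ (({c} : Set ℝ) ×ˢ (univ : Set ℝ)
            ∪ (univ : Set ℝ) ×ˢ ({c} : Set ℝ))) := measure_mono hsub2
        _ ≤ (μ.prod μ) ((K ×ˢ K) ∩ {p : ℝ × ℝ | p.2 + t < p.1})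
            + (μ.prod μ) (({c} : Set ℝ) ×ˢ (univ : Set ℝ) ∪ (univ : Set ℝ) ×ˢ ({c} : Set ℝ)) :=
            measure_union_le _ _
        _ = (μ.prod μ) ((K ×ˢ K) ∩ {p : ℝ × ℝ | p.2 + t < p.1}) := by
            have h1 : (μ.prod μ) (({c} : Set ℝ) ×ˢ (univ : Set ℝ)) = 0 := by
              rw [Measure.prod_prod, mu_atom μ hμ, zero_mul]
            have h2 : (μ.prod μ) ((univ : Set ℝ) ×ˢ ({c} : Set ℝ)) = 0 := by
              rw [Measure.prod_prod, mu_atom μ hμ, mul_zero]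
            rw [measure_union_null h1 h2, add_zero]
  -- ENNReal-level inequality for finite right end
  have hENN : ∀ b : ℝ, c ≤ b → (∀ u ∈ Ioo c b, u ∈ K') →
      (μ.prod μ) ((K ×ˢ K) ∩ {p : ℝ × ℝ | p.2 + t < p.1}) * (μ (K' ∩ Iic b) * μ (K' ∩ Iic b))
        ≤ (μ.prod μ) (((K' ∩ Iic b) ×ˢ (K' ∩ Iic b)) ∩ {p : ℝ × ℝ | p.2 + t < p.1})
          * (μ K * μ K) := by
    intro b hcb hsub
    have hreal := hopen_imp b hcb hsub
    rw [hFarKeq, hKeq, hGx b, hNQx b,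
      ← ENNReal.ofReal_mul (hG0 b), ← ENNReal.ofReal_mul (hNQ0 c),
      ← ENNReal.ofReal_mul (hG0 c), ← ENNReal.ofReal_mul (hNQ0 b)]
    apply ENNReal.ofReal_le_ofReal
    nlinarith [hreal, sq_nonneg (G b), sq_nonneg (G c)]
  by_cases hBdd' : BddAbove K'
  · set d := sSup K' with hd
    have hcd : c ≤ d := csSup_le_csSup hBdd' hKne hKK'
    have hK'd : K' ∩ Iic d = K' := inter_eq_left.mpr fun z hz => le_csSup hBdd' hz
    have hsub : ∀ u ∈ Ioo c d, u ∈ K' := by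
      intro u hu
      obtain ⟨k₀, hk₀K, hk₀c⟩ := hk0
      obtain ⟨k₁, hk₁, hk₁u⟩ := exists_lt_of_lt_csSup (hKne.mono hKK') hu.2
      exact hK'.out (hKK' hk₀K) hk₁ ⟨by linarith [hu.1], hk₁u.le⟩
    have := hENN d hcd hsub
    rwa [hK'd] at this
  · -- K' unbounded above
    have hK'ne : K'.Nonempty := hKne.mono hKK'
    have hsubn : ∀ n : ℕ, ∀ u ∈ Ioo c (c + (n : ℝ)), u ∈ K' := by
      intro n u hu
      obtain ⟨k₀, hk₀K, hk₀c⟩ := hk0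
      obtain ⟨k₁, hk₁, hk₁u⟩ : ∃ k₁ ∈ K', u < k₁ := by
        rcases not_bddAbove_iff.mp hBdd' u with ⟨k₁, hk₁, h⟩
        exact ⟨k₁, hk₁, h⟩
      exact hK'.out (hKK' hk₀K) hk₁ ⟨by linarith [hu.1], hk₁u.le⟩
    have hn : ∀ n : ℕ, (μ.prod μ) ((K ×ˢ K) ∩ {p : ℝ × ℝ | p.2 + t < p.1})
        * (μ (K' ∩ Iic (c + (n:ℝ))) * μ (K' ∩ Iic (c + (n:ℝ))))
        ≤ (μ.prod μ) ((K' ×ˢ K') ∩ {p : ℝ × ℝ | p.2 + t < p.1}) * (μ K * μ K) := by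
      intro n
      refine (hENN (c + (n:ℝ)) (le_add_of_nonneg_right (Nat.cast_nonneg n)) (hsubn n)).trans ?_
      exact mul_le_mul_left (measure_mono (inter_subset_inter
        (prod_mono (inter_subset_left) (inter_subset_left)) Subset.rfl)) _
    have hUnion : ⋃ n : ℕ, (K' ∩ Iic (c + (n : ℝ))) = K' := by
      ext z
      simp only [mem_iUnion, mem_inter_iff, mem_Iic]
      constructor
      · rintro ⟨n, hz, -⟩; exact hz
      · intro hz
        obtain ⟨n, hn'⟩ := exists_nat_ge (z - c)
        exact ⟨n, hz, by linarith⟩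
    have hmonoSet : Monotone fun n : ℕ => K' ∩ Iic (c + (n : ℝ)) := by
      intro a b hab
      exact inter_subset_inter_right _ (Iic_subset_Iic.mpr (by
        have : (a : ℝ) ≤ b := Nat.cast_le.mpr hab
        linarith))
    have hsup : μ K' = ⨆ n : ℕ, μ (K' ∩ Iic (c + (n : ℝ))) := by
      conv_lhs => rw [← hUnion]
      exact Directed.measure_iUnion hmonoSet.directed_le
    rw [hsup]
    set x := (μ.prod μ) ((K ×ˢ K) ∩ {p : ℝ × ℝ | p.2 + t < p.1}) with hx
    set y := (μ.prod μ) ((K' ×ˢ K') ∩ {p : ℝ × ℝ | p.2 + t < p.1}) * (μ K * μ K) with hy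
    set a : ℕ → ℝ≥0∞ := fun n => μ (K' ∩ Iic (c + (n : ℝ))) with ha
    calc x * ((⨆ n, a n) * (⨆ n, a n))
        = ⨆ n, ⨆ k, x * (a n * a k) := by
          rw [ENNReal.iSup_mul]
          simp_rw [ENNReal.mul_iSup]
      _ ≤ y := by
          refine iSup_le fun n => iSup_le fun k => ?_
          have h1 : a n ≤ a (max n k) := measure_mono (hmonoSet (le_max_left n k))
          have h2 : a k ≤ a (max n k) := measure_mono (hmonoSet (le_max_right n k))
          calc x * (a n * a k) ≤ x * (a (max n k) * a (max n k)) :=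
                mul_le_mul_right (mul_le_mul' h1 h2) x
            _ ≤ y := hn (max n k)

/-- Swap symmetry of the strict-gap set. -/
lemma far_swap (μ : Measure ℝ) [IsProbabilityMeasure μ]
    {J : Set ℝ} (hJm : MeasurableSet J) (t : ℝ) :
    (μ.prod μ) ((J ×ˢ J) ∩ {p : ℝ × ℝ | p.1 + t < p.2})
      = (μ.prod μ) ((J ×ˢ J) ∩ {p : ℝ × ℝ | p.2 + t < p.1}) := by
  have hm : MeasurableSet ((J ×ˢ J) ∩ {p : ℝ × ℝ | p.1 + t < p.2}) :=
    (hJm.prod hJm).inter (measurableSet_lt (measurable_fst.add_const t) measurable_snd)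
  calc (μ.prod μ) ((J ×ˢ J) ∩ {p : ℝ × ℝ | p.1 + t < p.2})
      = (Measure.map Prod.swap (μ.prod μ)) ((J ×ˢ J) ∩ {p : ℝ × ℝ | p.1 + t < p.2}) := by
        rw [Measure.prod_swap]
    _ = (μ.prod μ) (Prod.swap ⁻¹' ((J ×ˢ J) ∩ {p : ℝ × ℝ | p.1 + t < p.2})) := by
        rw [Measure.map_apply measurable_swap hm]
    _ = (μ.prod μ) ((J ×ˢ J) ∩ {p : ℝ × ℝ | p.2 + t < p.1}) := by
        congr 1
        ext ⟨x, y⟩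
        simp only [mem_preimage, Prod.swap_prod_mk, mem_inter_iff, mem_prod, mem_setOf_eq]
        tauto

/-- Ratio monotonicity when growing the interval to the left. -/
lemma grow_left (hf0 : ∀ x, 0 ≤ f x)
    (hlc : ∀ x y p q : ℝ, 0 ≤ p → 0 ≤ q → p + q = 1 → f x ^ p * f y ^ q ≤ f (p * x + q * y))
    (hcont : Continuous f)
    (μ : Measure ℝ) [IsProbabilityMeasure μ]
    (hμ : μ = volume.withDensity (fun x => ENNReal.ofReal (f x)))
    {K K' : Set ℝ} (hK : K.OrdConnected) (hK' : K'.OrdConnected)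
    (hKK' : K ⊆ K') (hdown : ∀ z ∈ K' \ K, ∀ w ∈ K, z ≤ w)
    (hKpos : 0 < μ K) {t : ℝ} (ht : 0 < t) :
    (μ.prod μ) ((K ×ˢ K) ∩ {p : ℝ × ℝ | p.2 + t < p.1}) * (μ K' * μ K')
      ≤ (μ.prod μ) ((K' ×ˢ K') ∩ {p : ℝ × ℝ | p.2 + t < p.1}) * (μ K * μ K) := by
  classical
  set f' : ℝ → ℝ := fun x => f (-x) with hf'
  set ν : Measure ℝ := μ.map Neg.neg with hν
  haveI : IsProbabilityMeasure ν := Measure.isProbabilityMeasure_map measurable_neg.aemeasurable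
  have hcont' : Continuous f' := hcont.comp continuous_neg
  have hf0' : ∀ x, 0 ≤ f' x := fun x => hf0 _
  have hνd : ν = volume.withDensity (fun x => ENNReal.ofReal (f' x)) := by
    ext s hs
    rw [hν, Measure.map_apply measurable_neg hs, hμ,
      withDensity_apply _ (hs.preimage measurable_neg), withDensity_apply _ hs]
    have := (Measure.measurePreserving_neg (volume : Measure ℝ)).setLIntegral_comp_preimage hs
      (f := fun x => ENNReal.ofReal (f' x)) (hcont'.measurable.ennreal_ofReal)
    simp only [hf', neg_neg] at this ⊢
    exact this
  have hlc' : ∀ x y p q : ℝ, 0 ≤ p → 0 ≤ q → p + q = 1 →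
      f' x ^ p * f' y ^ q ≤ f' (p * x + q * y) := by
    intro x y p q hp hq hpq
    have := hlc (-x) (-y) p q hp hq hpq
    have harg : p * -x + q * -y = -(p * x + q * y) := by ring
    rw [harg] at this
    exact this
  set K₁ : Set ℝ := Neg.neg ⁻¹' K with hK₁
  set K₁' : Set ℝ := Neg.neg ⁻¹' K' with hK₁'
  have hK₁o : K₁.OrdConnected := by
    refine ⟨fun x hx y hy z hz => ?_⟩
    exact hK.out hy hx ⟨neg_le_neg hz.2, neg_le_neg hz.1⟩
  have hK₁'o : K₁'.OrdConnected := by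
    refine ⟨fun x hx y hy z hz => ?_⟩
    exact hK'.out hy hx ⟨neg_le_neg hz.2, neg_le_neg hz.1⟩
  have hsub : K₁ ⊆ K₁' := fun z hz => hKK' hz
  have hup' : ∀ z ∈ K₁' \ K₁, ∀ w ∈ K₁, w ≤ z := by
    rintro z ⟨hz1, hz2⟩ w hw
    have := hdown (-z) ⟨hz1, hz2⟩ (-w) hw
    linarith
  have hνK : ∀ J : Set ℝ, MeasurableSet J → ν (Neg.neg ⁻¹' J) = μ J := by
    intro J hJ
    rw [hν, Measure.map_apply measurable_neg (hJ.preimage measurable_neg)]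
    congr 1
    ext z
    simp
  have hKm : MeasurableSet K := hK.measurableSet
  have hK'm : MeasurableSet K' := hK'.measurableSet
  have hνFar : ∀ J : Set ℝ, MeasurableSet J →
      (ν.prod ν) (((Neg.neg ⁻¹' J) ×ˢ (Neg.neg ⁻¹' J)) ∩ {p : ℝ × ℝ | p.2 + t < p.1})
        = (μ.prod μ) ((J ×ˢ J) ∩ {p : ℝ × ℝ | p.2 + t < p.1}) := by
    intro J hJ
    have hprod : ν.prod ν = Measure.map (Prod.map Neg.neg Neg.neg) (μ.prod μ) := by
      rw [hν]
      exact Measure.map_prod_map _ _ measurable_neg measurable_neg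
    rw [hprod, Measure.map_apply (measurable_neg.prodMap measurable_neg)
      (far_measurable (hJ.preimage measurable_neg) t)]
    have hpre : Prod.map (Neg.neg : ℝ → ℝ) Neg.neg ⁻¹'
        (((Neg.neg ⁻¹' J) ×ˢ (Neg.neg ⁻¹' J)) ∩ {p : ℝ × ℝ | p.2 + t < p.1})
        = (J ×ˢ J) ∩ {p : ℝ × ℝ | p.1 + t < p.2} := by
      ext ⟨x, y⟩
      simp only [mem_preimage, Prod.map_apply, mem_inter_iff, mem_prod, mem_setOf_eq, neg_neg]
      constructor
      · rintro ⟨⟨hx, hy⟩, hlt⟩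
        exact ⟨⟨hx, hy⟩, by linarith⟩
      · rintro ⟨⟨hx, hy⟩, hlt⟩
        exact ⟨⟨hx, hy⟩, by linarith⟩
    rw [hpre]
    exact far_swap μ hJ t
  have hmain := grow_right hf0' hlc' hcont' ν hνd hK₁o hK₁'o hsub hup'
    (by rw [hνK K hKm]; exact hKpos) ht
  rw [hνFar K hKm, hνFar K' hK'm, hνK K hKm, hνK K' hK'm] at hmain
  exact hmain

lemma ennreal_cross {a b x y : ℝ≥0∞} (hx0 : x ≠ 0) (hxt : x ≠ ∞) (hy0 : y ≠ 0) (hyt : y ≠ ∞)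
    (h : a * y ≤ b * x) : x⁻¹ * a ≤ y⁻¹ * b := by
  rw [← ENNReal.div_eq_inv_mul, ← ENNReal.div_eq_inv_mul]
  rw [ENNReal.div_le_iff hx0 hxt]
  have : b / y * x = b * x / y := by
    rw [div_eq_mul_inv, div_eq_mul_inv]; ring
  rw [this]
  rw [ENNReal.le_div_iff_mul_le (Or.inl hy0) (Or.inl hyt)]
  exact h

/-- Stochastic dominance of the gap between conditioned boxes. -/
lemma sd_boxes (hf0 : ∀ x, 0 ≤ f x)
    (hlc : ∀ x y p q : ℝ, 0 ≤ p → 0 ≤ q → p + q = 1 → f x ^ p * f y ^ q ≤ f (p * x + q * y))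
    (hcont : Continuous f)
    (μ : Measure ℝ) [IsProbabilityMeasure μ]
    (hμ : μ = volume.withDensity (fun x => ENNReal.ofReal (f x)))
    {A B : Set ℝ} (hA : A.OrdConnected) (hB : B.OrdConnected) (hAB : A ⊆ B)
    (hA0 : 0 < μ A) {τ : ℝ} (hτ : 0 ≤ τ) :
    (μ.prod μ)[|A ×ˢ A] {p : ℝ × ℝ | τ < |p.1 - p.2|}
      ≤ (μ.prod μ)[|B ×ˢ B] {p : ℝ × ℝ | τ < |p.1 - p.2|} := by
  classical
  have hAm : MeasurableSet A := hA.measurableSet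
  have hBm : MeasurableSet B := hB.measurableSet
  have hB0 : 0 < μ B := lt_of_lt_of_le hA0 (measure_mono hAB)
  -- the middle interval
  set C : Set ℝ := {z ∈ B | ∃ w ∈ A, z ≤ w} with hC
  have hAC : A ⊆ C := fun z hz => ⟨hAB hz, z, hz, le_refl z⟩
  have hCB : C ⊆ B := fun z hz => hz.1
  have hCo : C.OrdConnected := by
    refine ⟨fun x hx y hy z hz => ?_⟩
    obtain ⟨hyB, w, hwA, hyw⟩ := hy
    exact ⟨hB.out hx.1 hyB hz, w, hwA, le_trans hz.2 hyw⟩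
  have hCm : MeasurableSet C := hCo.measurableSet
  have hdown : ∀ z ∈ C \ A, ∀ w ∈ A, z ≤ w := by
    rintro z ⟨⟨hzB, w₀, hw₀, hzw₀⟩, hzA⟩ w hw
    by_contra hcon
    push_neg at hcon
    exact hzA (hA.out hw hw₀ ⟨hcon.le, hzw₀⟩)
  have hupBC : ∀ z ∈ B \ C, ∀ w ∈ C, w ≤ z := by
    rintro z ⟨hzB, hzC⟩ w hw
    by_contra hcon
    push_neg at hcon
    obtain ⟨hwB, w₀, hw₀, hww₀⟩ := hw
    exact hzC ⟨hzB, w₀, hw₀, le_trans hcon.le hww₀⟩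
  have hC0 : 0 < μ C := lt_of_lt_of_le hA0 (measure_mono hAC)
  -- cross inequality at the Far level, for positive gap
  have hcross : ∀ {t : ℝ}, 0 < t →
      (μ.prod μ) ((A ×ˢ A) ∩ {p : ℝ × ℝ | t < |p.1 - p.2|}) * (μ B * μ B)
        ≤ (μ.prod μ) ((B ×ˢ B) ∩ {p : ℝ × ℝ | t < |p.1 - p.2|}) * (μ A * μ A) := by
    intro t htpos
    -- decomposition |x - y| > t into the two strict half-planes
    have hdec : ∀ (I : Set ℝ), MeasurableSet I →
        (μ.prod μ) ((I ×ˢ I) ∩ {p : ℝ × ℝ | t < |p.1 - p.2|})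
          = 2 * (μ.prod μ) ((I ×ˢ I) ∩ {p : ℝ × ℝ | p.2 + t < p.1}) := by
      intro I hIm
      have hsetEq : (I ×ˢ I) ∩ {p : ℝ × ℝ | t < |p.1 - p.2|}
          = ((I ×ˢ I) ∩ {p : ℝ × ℝ | p.2 + t < p.1})
            ∪ ((I ×ˢ I) ∩ {p : ℝ × ℝ | p.1 + t < p.2}) := by
        ext ⟨x, y⟩
        simp only [mem_inter_iff, mem_union, mem_prod, mem_setOf_eq, lt_abs]
        constructor
        · rintro ⟨hmem, h | h⟩
          · exact Or.inl ⟨hmem, by linarith⟩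
          · exact Or.inr ⟨hmem, by linarith⟩
        · rintro (⟨hmem, h⟩ | ⟨hmem, h⟩)
          · exact ⟨hmem, Or.inl (by linarith)⟩
          · exact ⟨hmem, Or.inr (by linarith)⟩
      rw [hsetEq, measure_union _ ((hIm.prod hIm).inter
        (measurableSet_lt (measurable_fst.add_const t) measurable_snd)),
        far_swap μ hIm t, two_mul]
      · refine Set.disjoint_left.mpr ?_
        rintro ⟨x, y⟩ ⟨-, h1⟩ ⟨-, h2⟩
        simp only [mem_setOf_eq] at h1 h2
        linarith
    have h1 := grow_left hf0 hlc hcont μ hμ hA hCo hAC hdown hA0 htpos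
    have h2 := grow_right hf0 hlc hcont μ hμ hCo hB hCB hupBC hC0 htpos
    rw [hdec A hAm, hdec B hBm]
    have hk0 : μ C * μ C ≠ 0 := by
      simp only [ne_eq, mul_eq_zero, not_or]
      exact ⟨hC0.ne', hC0.ne'⟩
    have hkt : μ C * μ C ≠ ∞ := ENNReal.mul_ne_top (measure_ne_top μ C) (measure_ne_top μ C)
    rw [mul_assoc, mul_assoc]
    rw [← ENNReal.mul_le_mul_iff_right (a := μ C * μ C) hk0 hkt]
    calc (μ C * μ C) * (2 * ((μ.prod μ) ((A ×ˢ A) ∩ {p : ℝ × ℝ | p.2 + t < p.1}) * (μ B * μ B)))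
        = 2 * (((μ.prod μ) ((A ×ˢ A) ∩ {p : ℝ × ℝ | p.2 + t < p.1}) * (μ C * μ C)) * (μ B * μ B)) := by
          ring
      _ ≤ 2 * (((μ.prod μ) ((C ×ˢ C) ∩ {p : ℝ × ℝ | p.2 + t < p.1}) * (μ A * μ A)) * (μ B * μ B)) := by
          exact mul_le_mul_right (mul_le_mul_left h1 _) 2
      _ = 2 * (((μ.prod μ) ((C ×ˢ C) ∩ {p : ℝ × ℝ | p.2 + t < p.1}) * (μ B * μ B)) * (μ A * μ A)) := by
          ring
      _ ≤ 2 * (((μ.prod μ) ((B ×ˢ B) ∩ {p : ℝ × ℝ | p.2 + t < p.1}) * (μ C * μ C)) * (μ A * μ A)) := by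
          exact mul_le_mul_right (mul_le_mul_left h2 _) 2
      _ = (μ C * μ C) * (2 * ((μ.prod μ) ((B ×ˢ B) ∩ {p : ℝ × ℝ | p.2 + t < p.1}) * (μ A * μ A))) := by
          ring
  -- conditional version for positive gap
  have hcond : ∀ {t : ℝ}, 0 < t →
      (μ.prod μ)[|A ×ˢ A] {p : ℝ × ℝ | t < |p.1 - p.2|}
        ≤ (μ.prod μ)[|B ×ˢ B] {p : ℝ × ℝ | t < |p.1 - p.2|} := by
    intro t htpos
    rw [cond_apply (hAm.prod hAm), cond_apply (hBm.prod hBm),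
      Measure.prod_prod, Measure.prod_prod]
    exact ennreal_cross
      (by simp only [ne_eq, mul_eq_zero, not_or]; exact ⟨hA0.ne', hA0.ne'⟩)
      (ENNReal.mul_ne_top (measure_ne_top μ A) (measure_ne_top μ A))
      (by simp only [ne_eq, mul_eq_zero, not_or]; exact ⟨hB0.ne', hB0.ne'⟩)
      (ENNReal.mul_ne_top (measure_ne_top μ B) (measure_ne_top μ B))
      (hcross htpos)
  rcases eq_or_lt_of_le hτ with hτ0 | hτpos
  swap
  · exact hcond hτpos
  -- τ = 0 : take a sup over τ = 1/(n+1)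
  subst hτ0
  have hSn : ∀ P : Measure (ℝ × ℝ),
      P {p : ℝ × ℝ | 0 < |p.1 - p.2|}
        = ⨆ n : ℕ, P {p : ℝ × ℝ | 1 / ((n : ℝ) + 1) < |p.1 - p.2|} := by
    intro P
    have hmono : Monotone fun n : ℕ => {p : ℝ × ℝ | 1 / ((n : ℝ) + 1) < |p.1 - p.2|} := by
      intro a b hab p hp
      simp only [mem_setOf_eq] at hp ⊢
      have h1 : (1 : ℝ) / ((b : ℝ) + 1) ≤ 1 / ((a : ℝ) + 1) := by
        apply one_div_le_one_div_of_le
        · positivity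
        · have : (a : ℝ) ≤ b := Nat.cast_le.mpr hab
          linarith
      linarith
    have hU : ⋃ n : ℕ, {p : ℝ × ℝ | 1 / ((n : ℝ) + 1) < |p.1 - p.2|}
        = {p : ℝ × ℝ | 0 < |p.1 - p.2|} := by
      ext p
      simp only [mem_iUnion, mem_setOf_eq]
      constructor
      · rintro ⟨n, hn⟩
        have : (0 : ℝ) < 1 / ((n : ℝ) + 1) := by positivity
        linarith
      · intro hp
        obtain ⟨n, hn⟩ := exists_nat_one_div_lt hp
        exact ⟨n, hn⟩
    rw [← hU]
    exact Directed.measure_iUnion hmono.directed_le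
  rw [hSn, hSn]
  refine iSup_le fun n => le_trans (hcond (by positivity)) (le_iSup_of_le n (le_refl _))

/-- From stochastic dominance of `|X₁ - X₂|` to comparison of expectations of
functions increasing in `|u|`. -/
lemma integral_comp_le (P Q : Measure (ℝ × ℝ)) [IsProbabilityMeasure P] [IsProbabilityMeasure Q]
    (hPnull : ∀ τ : ℝ, 0 ≤ τ → P {p : ℝ × ℝ | |p.1 - p.2| = τ} = 0)
    (hsd : ∀ τ : ℝ, 0 ≤ τ → P {p : ℝ × ℝ | τ < |p.1 - p.2|} ≤ Q {p : ℝ × ℝ | τ < |p.1 - p.2|})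
    (φ ψ : ℝ → ℝ) (hψ : MonotoneOn ψ (Ici 0)) (hφψ : ∀ u, φ u = ψ |u|)
    (hPint : Integrable (fun p : ℝ × ℝ => φ (p.1 - p.2)) P)
    (hQint : Integrable (fun p : ℝ × ℝ => φ (p.1 - p.2)) Q) :
    ∫ p : ℝ × ℝ, φ (p.1 - p.2) ∂P ≤ ∫ p : ℝ × ℝ, φ (p.1 - p.2) ∂Q := by
  classical
  set V : ℝ × ℝ → ℝ := fun p => φ (p.1 - p.2) with hV
  set c₀ : ℝ := ψ 0 with hc₀
  have hVge : ∀ p, c₀ ≤ V p := fun p => by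
    rw [hV]
    simp only
    rw [hφψ]
    exact hψ self_mem_Ici (mem_Ici.mpr (abs_nonneg _)) (abs_nonneg _)
  have hlev : ∀ c : ℝ, P {p : ℝ × ℝ | c < V p} ≤ Q {p : ℝ × ℝ | c < V p} := by
    intro c
    set S : Set ℝ := {u : ℝ | 0 ≤ u ∧ c < ψ u} with hSdef
    by_cases hS : S.Nonempty
    · set τ := sInf S with hτ
      have hbdd : BddBelow S := ⟨0, fun u hu => hu.1⟩
      have hτ0 : 0 ≤ τ := le_csInf hS fun u hu => hu.1
      have hupper : {p : ℝ × ℝ | τ < |p.1 - p.2|} ⊆ {p : ℝ × ℝ | c < V p} := by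
        intro p hp
        simp only [mem_setOf_eq] at hp ⊢
        obtain ⟨v, hvS, hvlt⟩ := exists_lt_of_csInf_lt hS hp
        rw [hV]
        simp only
        rw [hφψ]
        exact lt_of_lt_of_le hvS.2 (hψ (mem_Ici.mpr hvS.1) (mem_Ici.mpr (abs_nonneg _)) hvlt.le)
      have hlower : {p : ℝ × ℝ | c < V p} ⊆ {p : ℝ × ℝ | τ ≤ |p.1 - p.2|} := by
        intro p hp
        simp only [mem_setOf_eq] at hp ⊢
        refine csInf_le hbdd ⟨abs_nonneg _, ?_⟩
        rw [hV] at hp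
        simp only at hp
        rwa [hφψ] at hp
      calc P {p : ℝ × ℝ | c < V p} ≤ P {p : ℝ × ℝ | τ ≤ |p.1 - p.2|} := measure_mono hlower
        _ ≤ P ({p : ℝ × ℝ | τ < |p.1 - p.2|} ∪ {p : ℝ × ℝ | |p.1 - p.2| = τ}) := by
            apply measure_mono
            intro p hp
            simp only [mem_setOf_eq, mem_union] at hp ⊢
            rcases lt_or_eq_of_le hp with h | h
            · exact Or.inl h
            · exact Or.inr h.symm
        _ ≤ P {p : ℝ × ℝ | τ < |p.1 - p.2|} + P {p : ℝ × ℝ | |p.1 - p.2| = τ} :=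
            measure_union_le _ _
        _ = P {p : ℝ × ℝ | τ < |p.1 - p.2|} := by rw [hPnull τ hτ0, add_zero]
        _ ≤ Q {p : ℝ × ℝ | τ < |p.1 - p.2|} := hsd τ hτ0
        _ ≤ Q {p : ℝ × ℝ | c < V p} := measure_mono hupper
    · have hempty : {p : ℝ × ℝ | c < V p} = ∅ := by
        ext p
        simp only [mem_setOf_eq, mem_empty_iff_false, iff_false, not_lt]
        by_contra hcon
        push_neg at hcon
        refine hS ⟨|p.1 - p.2|, abs_nonneg _, ?_⟩
        rw [hV] at hcon
        simp only at hcon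
        rwa [hφψ] at hcon
      rw [hempty]
      simp
  set W : ℝ × ℝ → ℝ := fun p => V p - c₀ with hW
  have hW0 : ∀ p, 0 ≤ W p := fun p => sub_nonneg.mpr (hVge p)
  have hWintP : Integrable W P := hPint.sub (integrable_const c₀)
  have hWintQ : Integrable W Q := hQint.sub (integrable_const c₀)
  have hsplit : ∀ (R : Measure (ℝ × ℝ)) [IsProbabilityMeasure R],
      Integrable V R → ∫ p, V p ∂ R = (∫⁻ p, ENNReal.ofReal (W p) ∂ R).toReal + c₀ := by
    intro R hR hVint
    have h1 : ∫ p, W p ∂ R = ∫ p, V p ∂ R - c₀ := by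
      rw [hW]
      simp only
      rw [integral_sub hVint (integrable_const c₀), integral_const]
      simp [measure_univ]
    have h2 : ∫ p, W p ∂ R = (∫⁻ p, ENNReal.ofReal (W p) ∂ R).toReal :=
      integral_eq_lintegral_of_nonneg_ae (Filter.Eventually.of_forall hW0)
        (hVint.sub (integrable_const c₀)).1
    rw [← h2, h1]
    ring
  have hlayer : ∀ (R : Measure (ℝ × ℝ)), Integrable W R →
      ∫⁻ p, ENNReal.ofReal (W p) ∂ R = ∫⁻ τ in Ioi 0, R {p : ℝ × ℝ | τ < W p} := fun R hint =>
    lintegral_eq_lintegral_meas_lt R (Filter.Eventually.of_forall hW0) hint.aemeasurable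
  have hWlev : ∀ τ : ℝ, {p : ℝ × ℝ | τ < W p} = {p : ℝ × ℝ | c₀ + τ < V p} := by
    intro τ
    ext p
    simp only [hW, mem_setOf_eq]
    constructor <;> intro h <;> linarith
  have hle : ∫⁻ p, ENNReal.ofReal (W p) ∂P ≤ ∫⁻ p, ENNReal.ofReal (W p) ∂Q := by
    rw [hlayer P hWintP, hlayer Q hWintQ]
    refine lintegral_mono fun τ => ?_
    rw [hWlev τ]
    exact hlev (c₀ + τ)
  have hQfin : ∫⁻ p, ENNReal.ofReal (W p) ∂Q ≠ ∞ := (Integrable.lintegral_lt_top hWintQ).ne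
  rw [hsplit P hPint, hsplit Q hQint]
  exact add_le_add_left (ENNReal.toReal_mono hQfin hle) c₀

lemma line_null (μ : Measure ℝ) [IsProbabilityMeasure μ]
    (hμ : μ = volume.withDensity (fun x => ENNReal.ofReal (f x))) (r : ℝ) :
    (μ.prod μ) {p : ℝ × ℝ | p.1 - p.2 = r} = 0 := by
  have hm : MeasurableSet {p : ℝ × ℝ | p.1 - p.2 = r} :=
    measurableSet_preimage (measurable_fst.sub measurable_snd) (measurableSet_singleton r)
  rw [Measure.prod_apply hm]
  have : ∀ x : ℝ, μ (Prod.mk x ⁻¹' {p : ℝ × ℝ | p.1 - p.2 = r}) = 0 := by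
    intro x
    have : Prod.mk x ⁻¹' {p : ℝ × ℝ | p.1 - p.2 = r} = {x - r} := by
      ext y
      simp only [mem_preimage, mem_setOf_eq, mem_singleton_iff]
      constructor <;> intro h <;> linarith
    rw [this, mu_atom μ hμ]
  simp only [this]
  simp

lemma cond_abs_null (μ : Measure ℝ) [IsProbabilityMeasure μ]
    (hμ : μ = volume.withDensity (fun x => ENNReal.ofReal (f x)))
    {I : Set ℝ} (hIm : MeasurableSet I) {τ : ℝ} (hτ : 0 ≤ τ) :
    (μ.prod μ)[|I ×ˢ I] {p : ℝ × ℝ | |p.1 - p.2| = τ} = 0 := by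
  rw [cond_apply (hIm.prod hIm)]
  have hnull : (μ.prod μ) {p : ℝ × ℝ | |p.1 - p.2| = τ} = 0 := by
    have hsub : {p : ℝ × ℝ | |p.1 - p.2| = τ}
        ⊆ {p : ℝ × ℝ | p.1 - p.2 = τ} ∪ {p : ℝ × ℝ | p.1 - p.2 = -τ} := by
      intro p hp
      simp only [mem_setOf_eq] at hp
      rcases (abs_eq hτ).mp hp with h | h
      · exact Or.inl h
      · exact Or.inr h
    exact measure_mono_null hsub
      (measure_union_null (line_null μ hμ τ) (line_null μ hμ (-τ)))
  rw [measure_mono_null (inter_subset_right) hnull, mul_zero]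

lemma cond_box (μ : Measure ℝ) [IsProbabilityMeasure μ]
    {I : Set ℝ} (hIm : MeasurableSet I) (hI0 : 0 < μ I) :
    (μ.prod μ)[|I ×ˢ I] = (μ[|I]).prod (μ[|I]) := by
  haveI : IsProbabilityMeasure (μ[|I]) := cond_isProbabilityMeasure hI0.ne'
  refine (Measure.prod_eq fun s t' hs ht' => ?_).symm
  rw [cond_apply (hIm.prod hIm), cond_apply hIm, cond_apply hIm,
    Set.prod_inter_prod, Measure.prod_prod, Measure.prod_prod]
  have hinv : (μ I * μ I)⁻¹ = (μ I)⁻¹ * (μ I)⁻¹ :=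
    ENNReal.mul_inv (Or.inl hI0.ne') (Or.inl (measure_ne_top μ I))
  rw [hinv]
  ring

lemma sq_integrable_prod (ν : Measure ℝ) [IsProbabilityMeasure ν] (hm : MemLp id 2 ν) :
    Integrable (fun p : ℝ × ℝ => (p.1 - p.2) ^ 2) (ν.prod ν) := by
  have hsq : Integrable (fun x : ℝ => x ^ 2) ν := by
    simpa using hm.integrable_sq
  have hid : Integrable (fun x : ℝ => x) ν := by
    exact hm.integrable one_le_two
  have Ia : Integrable (fun p : ℝ × ℝ => p.1 ^ 2) (ν.prod ν) := by
    simpa using hsq.smul_prod (integrable_const (1 : ℝ))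
  have Ib : Integrable (fun p : ℝ × ℝ => p.2 ^ 2) (ν.prod ν) := by
    simpa using (integrable_const (1 : ℝ)).smul_prod hsq
  have Ic : Integrable (fun p : ℝ × ℝ => p.1 * p.2) (ν.prod ν) := by
    simpa using hid.smul_prod hid
  have hexpand : (fun p : ℝ × ℝ => (p.1 - p.2) ^ 2)
      = fun p : ℝ × ℝ => (p.1 ^ 2 + p.2 ^ 2) - 2 * (p.1 * p.2) := funext fun p => by ring
  rw [hexpand]
  exact (Ia.add Ib).sub (Ic.const_mul 2)

lemma var_double (ν : Measure ℝ) [IsProbabilityMeasure ν] (hm : MemLp id 2 ν) :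
    2 * variance id ν = ∫ p : ℝ × ℝ, (p.1 - p.2) ^ 2 ∂(ν.prod ν) := by
  have hsq : Integrable (fun x : ℝ => x ^ 2) ν := by
    simpa using hm.integrable_sq
  have hid : Integrable (fun x : ℝ => x) ν := by
    exact hm.integrable one_le_two
  have Ia : Integrable (fun p : ℝ × ℝ => p.1 ^ 2) (ν.prod ν) := by
    simpa using hsq.smul_prod (integrable_const (1 : ℝ))
  have Ib : Integrable (fun p : ℝ × ℝ => p.2 ^ 2) (ν.prod ν) := by
    simpa using (integrable_const (1 : ℝ)).smul_prod hsq
  have Ic : Integrable (fun p : ℝ × ℝ => p.1 * p.2) (ν.prod ν) := by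
    simpa using hid.smul_prod hid
  set m2 : ℝ := ∫ x, x ^ 2 ∂ν with hm2
  set m1 : ℝ := ∫ x, x ∂ν with hm1
  have hva : ∫ p : ℝ × ℝ, p.1 ^ 2 ∂(ν.prod ν) = m2 := by
    have := integral_prod_mul (μ := ν) (ν := ν) (fun x => x ^ 2) (fun _ => (1 : ℝ))
    simpa using this
  have hvb : ∫ p : ℝ × ℝ, p.2 ^ 2 ∂(ν.prod ν) = m2 := by
    have := integral_prod_mul (μ := ν) (ν := ν) (fun _ => (1 : ℝ)) (fun x => x ^ 2)
    simpa using this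
  have hvc : ∫ p : ℝ × ℝ, p.1 * p.2 ∂(ν.prod ν) = m1 * m1 := by
    have := integral_prod_mul (μ := ν) (ν := ν) (fun x => x) (fun x => x)
    simpa using this
  have hexpand : (fun p : ℝ × ℝ => (p.1 - p.2) ^ 2)
      = fun p : ℝ × ℝ => (p.1 ^ 2 + p.2 ^ 2) - 2 * (p.1 * p.2) := funext fun p => by ring
  have hint : ∫ p : ℝ × ℝ, (p.1 - p.2) ^ 2 ∂(ν.prod ν) = 2 * m2 - 2 * (m1 * m1) := by
    have e1 := integral_sub (Ia.add Ib) (Ic.const_mul 2)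
    have e2 := integral_add Ia Ib
    simp only [Pi.add_apply] at e1 e2
    rw [hexpand, e1, e2, integral_const_mul, hva, hvb, hvc]
    ring
  have hvarid : variance id ν = m2 - m1 ^ 2 := by
    rw [variance_eq_sub hm]
    simp only [Pi.pow_apply, id_eq, hm2, hm1]
  rw [hint, hvarid]
  ring

end Stmt18

/-- Let `X₁, X₂` be i.i.d. with log-concave differentiable density
`f`, and `U = X₁ - X₂`. Then for every `φ` increasing in `|u|` (i.e. `φ = ψ ∘ |·|`
with `ψ` increasing on `[0, ∞)`) the conditional expectation
`E(φ(U) | X₁, X₂ ∈ A)` (when defined) satisfies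
`E(φ(U) | X₁, X₂ ∈ A) ≤ E(φ(U) | X₁, X₂ ∈ B)` for intervals `A ⊆ B`.
In particular (`φ u = u²/2`) the conditional variance `Var(X | X ∈ A)` is
partially monotonic, and (`φ u = |u|`) so is `E(|X₁ - X₂| | X₁, X₂ ∈ A)`. -/
theorem conditional_expectation_partially_monotone
    (f : ℝ → ℝ) (hf0 : ∀ x, 0 ≤ f x)
    (hlc : ∀ x y p q : ℝ, 0 ≤ p → 0 ≤ q → p + q = 1 →
      f x ^ p * f y ^ q ≤ f (p * x + q * y))
    (hdiff : Differentiable ℝ f)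
    (μ : Measure ℝ) [IsProbabilityMeasure μ]
    (hμ : μ = volume.withDensity (fun x => ENNReal.ofReal (f x)))
    (A B : Set ℝ) (hA : A.OrdConnected) (hB : B.OrdConnected) (hAB : A ⊆ B)
    (hApos : 0 < (μ.prod μ) (A ×ˢ A)) :
    (∀ φ ψ : ℝ → ℝ, MonotoneOn ψ (Ici 0) → (∀ u, φ u = ψ |u|) →
      Integrable (fun p : ℝ × ℝ => φ (p.1 - p.2)) ((μ.prod μ)[|A ×ˢ A]) →
      Integrable (fun p : ℝ × ℝ => φ (p.1 - p.2)) ((μ.prod μ)[|B ×ˢ B]) →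
      (∫ p : ℝ × ℝ, φ (p.1 - p.2) ∂((μ.prod μ)[|A ×ˢ A])) ≤
        ∫ p : ℝ × ℝ, φ (p.1 - p.2) ∂((μ.prod μ)[|B ×ˢ B])) ∧
    (MemLp id 2 (μ[|A]) → MemLp id 2 (μ[|B]) →
      variance id (μ[|A]) ≤ variance id (μ[|B])) ∧
    (Integrable (fun p : ℝ × ℝ => |p.1 - p.2|) ((μ.prod μ)[|A ×ˢ A]) →
      Integrable (fun p : ℝ × ℝ => |p.1 - p.2|) ((μ.prod μ)[|B ×ˢ B]) →
      (∫ p : ℝ × ℝ, |p.1 - p.2| ∂((μ.prod μ)[|A ×ˢ A])) ≤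
        ∫ p : ℝ × ℝ, |p.1 - p.2| ∂((μ.prod μ)[|B ×ˢ B])) := by
  have hcont : Continuous f := hdiff.continuous
  have hAm : MeasurableSet A := hA.measurableSet
  have hBm : MeasurableSet B := hB.measurableSet
  have hA0 : 0 < μ A := by
    rw [Measure.prod_prod] at hApos
    by_contra hcon
    push_neg at hcon
    have h0 : μ A = 0 := le_antisymm hcon zero_le
    rw [h0, zero_mul] at hApos
    exact absurd hApos (lt_irrefl 0)
  have hB0 : 0 < μ B := lt_of_lt_of_le hA0 (measure_mono hAB)
  have hBpos : 0 < (μ.prod μ) (B ×ˢ B) := by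
    rw [Measure.prod_prod]
    exact ENNReal.mul_pos hB0.ne' hB0.ne'
  have hApos' : (μ.prod μ) (A ×ˢ A) ≠ 0 := hApos.ne'
  have hBpos' : (μ.prod μ) (B ×ˢ B) ≠ 0 := hBpos.ne'
  haveI hPA : IsProbabilityMeasure ((μ.prod μ)[|A ×ˢ A]) :=
    cond_isProbabilityMeasure hApos'
  haveI hPB : IsProbabilityMeasure ((μ.prod μ)[|B ×ˢ B]) :=
    cond_isProbabilityMeasure hBpos'
  have bullet1 : ∀ φ ψ : ℝ → ℝ, MonotoneOn ψ (Ici 0) → (∀ u, φ u = ψ |u|) →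
      Integrable (fun p : ℝ × ℝ => φ (p.1 - p.2)) ((μ.prod μ)[|A ×ˢ A]) →
      Integrable (fun p : ℝ × ℝ => φ (p.1 - p.2)) ((μ.prod μ)[|B ×ˢ B]) →
      (∫ p : ℝ × ℝ, φ (p.1 - p.2) ∂((μ.prod μ)[|A ×ˢ A])) ≤
        ∫ p : ℝ × ℝ, φ (p.1 - p.2) ∂((μ.prod μ)[|B ×ˢ B]) := by
    intro φ ψ hψ hφψ hPint hQint
    refine Stmt18.integral_comp_le _ _ ?_ ?_ φ ψ hψ hφψ hPint hQint
    · exact fun τ hτ => Stmt18.cond_abs_null μ hμ hAm hτ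
    · exact fun τ hτ => Stmt18.sd_boxes hf0 hlc hcont μ hμ hA hB hAB hA0 hτ
  refine ⟨bullet1, ?_, ?_⟩
  · intro hMA hMB
    haveI : IsProbabilityMeasure (μ[|A]) := cond_isProbabilityMeasure hA0.ne'
    haveI : IsProbabilityMeasure (μ[|B]) := cond_isProbabilityMeasure hB0.ne'
    have hboxA := Stmt18.cond_box μ hAm hA0
    have hboxB := Stmt18.cond_box μ hBm hB0
    have hIA : Integrable (fun p : ℝ × ℝ => (p.1 - p.2) ^ 2) ((μ.prod μ)[|A ×ˢ A]) := by
      rw [hboxA]; exact Stmt18.sq_integrable_prod _ hMA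
    have hIB : Integrable (fun p : ℝ × ℝ => (p.1 - p.2) ^ 2) ((μ.prod μ)[|B ×ˢ B]) := by
      rw [hboxB]; exact Stmt18.sq_integrable_prod _ hMB
    have happ := bullet1 (fun u => u ^ 2) (fun u => u ^ 2)
      (fun a ha b hb hab => pow_le_pow_left₀ (mem_Ici.mp ha) hab 2)
      (fun u => (sq_abs u).symm) hIA hIB
    have hvA := Stmt18.var_double (μ[|A]) hMA
    have hvB := Stmt18.var_double (μ[|B]) hMB
    rw [hboxA, hboxB] at happ
    linarith
  · intro h1 h2
    have habs : MonotoneOn (fun u : ℝ => |u|) (Ici 0) := by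
      intro a ha b hb hab
      simp only
      rw [abs_of_nonneg (mem_Ici.mp ha), abs_of_nonneg (mem_Ici.mp hb)]
      exact hab
    exact bullet1 (fun u => |u|) (fun u => |u|) habs (fun u => (abs_abs u).symm) h1 h2
end
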